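/- For any consistent LE-ALC ABox A and any individual names b, y occurring in A: (1) A ⊨ ¬(b I y) iff ¬(b I y) ∈ A; (2) A ⊨ ¬(b R_□ y) iff ¬(b R_□ y) ∈ A; (3) A ⊨ ¬(y R_◇ b) iff ¬(y R_◇ b) ∈ A. -/

import Mathlib

/-!
Common formal infrastructure for the description logic LE-ALC:
syntax of concepts, individual names, ABox terms, the tableaux expansion
rules and completion, and the polarity-based (enriched formal context)
semantics.
-/

namespace LEALC

/-- LE-ALC concepts: `C ::= D | C₁ ∧ C₂ | C₁ ∨ C₂ | [R_□]C | ⟨R_◇⟩C`. -/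
inductive Cpt : Type
  | atom : ℕ → Cpt
  | meet : Cpt → Cpt → Cpt
  | join : Cpt → Cpt → Cpt
  | box  : Cpt → Cpt
  | dia  : Cpt → Cpt
  deriving DecidableEq

/-- Object individual names: ordinary names from `OBJ`, classifying objects
`a_C`, and the prefixed names `◇b`, `◆b` generated by the tableaux. -/
inductive ObName : Type
  | base : ℕ → ObName
  | cls  : Cpt → ObName
  | dia  : ObName → ObName
  | bdia : ObName → ObName
  deriving DecidableEq

/-- Feature individual names: ordinary names from `FEAT`, classifying features
`x_C`, and the prefixed names `□y`, `■y` generated by the tableaux. -/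
inductive FtName : Type
  | base : ℕ → FtName
  | cls  : Cpt → FtName
  | box  : FtName → FtName
  | bbox : FtName → FtName
  deriving DecidableEq

/-- `◇b`, with the identification `◇a_C = a_{◇C}`. -/
def ObName.diaS : ObName → ObName
  | .cls C => .cls (.dia C)
  | b => .dia b

/-- `□y`, with the identification `□x_C = x_{□C}`. -/
def FtName.boxS : FtName → FtName
  | .cls C => .cls (.box C)
  | y => .box y

/-- Positive (unnegated) ABox terms:
`a I x`, `a R_□ x`, `x R_◇ a`, `a : C`, `x :: C`. -/
inductive PTerm : Type
  | rI   : ObName → FtName → PTerm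
  | rbox : ObName → FtName → PTerm
  | rdia : FtName → ObName → PTerm
  | mem  : ObName → Cpt → PTerm
  | fmem : FtName → Cpt → PTerm
  deriving DecidableEq

/-- ABox terms: a positive term or its negation. -/
inductive Term : Type
  | pos : PTerm → Term
  | neg : PTerm → Term
  deriving DecidableEq

/-- The relational terms are `a I x`, `a R_□ x` and `x R_◇ a`. -/
def PTerm.IsRelational : PTerm → Prop
  | .rI _ _ => True
  | .rbox _ _ => True
  | .rdia _ _ => True
  | .mem _ _ => False
  | .fmem _ _ => False

/-- Subformulas (subconcepts) of a concept. -/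
def Cpt.subs : Cpt → Finset Cpt
  | .atom n => {Cpt.atom n}
  | .meet C₁ C₂ => insert (Cpt.meet C₁ C₂) (C₁.subs ∪ C₂.subs)
  | .join C₁ C₂ => insert (Cpt.join C₁ C₂) (C₁.subs ∪ C₂.subs)
  | .box C => insert (Cpt.box C) C.subs
  | .dia C => insert (Cpt.dia C) C.subs

/-- The concepts occurring in a term (subformulas of the concept of a
(possibly negated) membership assertion). -/
def Term.cpts : Term → Finset Cpt
  | .pos (.mem _ C) => C.subs
  | .pos (.fmem _ C) => C.subs
  | .neg (.mem _ C) => C.subs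
  | .neg (.fmem _ C) => C.subs
  | _ => ∅

/-- The concept `C` occurs in the set of terms `A`. -/
def Occurs (C : Cpt) (A : Set Term) : Prop := ∃ t ∈ A, C ∈ t.cpts

def PTerm.objs : PTerm → List ObName
  | .rI b _ => [b]
  | .rbox b _ => [b]
  | .rdia _ b => [b]
  | .mem b _ => [b]
  | .fmem _ _ => []

def PTerm.feats : PTerm → List FtName
  | .rI _ y => [y]
  | .rbox _ y => [y]
  | .rdia y _ => [y]
  | .mem _ _ => []
  | .fmem y _ => [y]

def Term.objs : Term → List ObName
  | .pos t => t.objs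
  | .neg t => t.objs

def Term.feats : Term → List FtName
  | .pos t => t.feats
  | .neg t => t.feats

/-- The object name `b` occurs in the set of terms `S`. -/
def ObOccurs (b : ObName) (S : Set Term) : Prop := ∃ t ∈ S, b ∈ t.objs

/-- The feature name `y` occurs in the set of terms `S`. -/
def FtOccurs (y : FtName) (S : Set Term) : Prop := ∃ t ∈ S, y ∈ t.feats

def ObName.IsBase (b : ObName) : Prop := ∃ n, b = ObName.base n
def FtName.IsBase (y : FtName) : Prop := ∃ n, y = FtName.base n

/-- A term all of whose individual names are ordinary (non-generated) names. -/
def Term.Plain (t : Term) : Prop :=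
  (∀ b ∈ t.objs, b.IsBase) ∧ (∀ y ∈ t.feats, y.IsBase)

/-- An ABox is a set of terms over the ordinary individual names `OBJ`/`FEAT`
(the generated names `a_C`, `x_C`, `◇b`, `◆b`, `□y`, `■y` are fresh). -/
def ABoxWF (A : Set Term) : Prop := ∀ t ∈ A, t.Plain

def Cpt.csize : Cpt → ℕ
  | .atom _ => 1
  | .meet C₁ C₂ => C₁.csize + C₂.csize + 1
  | .join C₁ C₂ => C₁.csize + C₂.csize + 1
  | .box C => C.csize + 1
  | .dia C => C.csize + 1

def PTerm.psize : PTerm → ℕ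
  | .rI _ _ => 1
  | .rbox _ _ => 1
  | .rdia _ _ => 1
  | .mem _ C => C.csize + 1
  | .fmem _ C => C.csize + 1

def Term.tsize : Term → ℕ
  | .pos t => t.psize + 1
  | .neg t => t.psize + 2

/-- The size `|A|` of an ABox. -/
def aboxSize (A : Finset Term) : ℕ := A.sum Term.tsize

/-- Box-depth of a concept. -/
def Cpt.bd : Cpt → ℕ
  | .atom _ => 0
  | .meet C₁ C₂ => max C₁.bd C₂.bd
  | .join C₁ C₂ => max C₁.bd C₂.bd
  | .box C => C.bd + 1
  | .dia C => C.bd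

/-- Diamond-depth of a concept. -/
def Cpt.dd : Cpt → ℕ
  | .atom _ => 0
  | .meet C₁ C₂ => max C₁.dd C₂.dd
  | .join C₁ C₂ => max C₁.dd C₂.dd
  | .box C => C.dd
  | .dia C => C.dd + 1

/-- Box-depth of an object name (names in the input ABox have depth 0,
prefixing changes the depth, classifying names inherit depths from their
concept). -/
def ObName.bd : ObName → ℤ
  | .base _ => 0
  | .cls C => -(C.bd : ℤ)
  | .dia b => b.bd
  | .bdia b => b.bd + 1

/-- Diamond-depth of an object name. -/
def ObName.dd : ObName → ℤ
  | .base _ => 0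
  | .cls C => -(C.dd : ℤ)
  | .dia b => b.dd + 1
  | .bdia b => b.dd

/-- Box-depth of a feature name. -/
def FtName.bd : FtName → ℤ
  | .base _ => 0
  | .cls C => -(C.bd : ℤ)
  | .box y => y.bd + 1
  | .bbox y => y.bd

/-- Diamond-depth of a feature name. -/
def FtName.dd : FtName → ℤ
  | .base _ => 0
  | .cls C => -(C.dd : ℤ)
  | .box y => y.dd
  | .bbox y => y.dd + 1

/-- All concepts occurring in an ABox. -/
def aboxCpts (A : Finset Term) : Finset Cpt := A.biUnion Term.cpts

/-- `□_D(A)`: maximal box-depth of a concept occurring in `A`. -/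
def aboxBd (A : Finset Term) : ℕ := (aboxCpts A).sup Cpt.bd

/-- `◇_D(A)`: maximal diamond-depth of a concept occurring in `A`. -/
def aboxDd (A : Finset Term) : ℕ := (aboxCpts A).sup Cpt.dd

/-- One-step derivability: `Deriv E A S t` holds iff the term `t` can be
added by applying one of the LE-ALC tableaux expansion rules (or the extra
rule `E`) to the current set of terms `S`, `A` being the input ABox (used
for the side conditions of the creation and inverse rules). -/
inductive Deriv (E : Term → Term → Prop) (A S : Set Term) : Term → Prop
  /-- creation rule -/
  | create_a {C : Cpt} : Occurs C A → Deriv E A S (.pos (.mem (.cls C) C))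
  | create_x {C : Cpt} : Occurs C A → Deriv E A S (.pos (.fmem (.cls C) C))
  /-- basic rule -/
  | basic {b y C} : Term.pos (.mem b C) ∈ S → Term.pos (.fmem y C) ∈ S →
      Deriv E A S (.pos (.rI b y))
  /-- rules for the logical connectives -/
  | andA_l {b C₁ C₂} : Term.pos (.mem b (.meet C₁ C₂)) ∈ S → Deriv E A S (.pos (.mem b C₁))
  | andA_r {b C₁ C₂} : Term.pos (.mem b (.meet C₁ C₂)) ∈ S → Deriv E A S (.pos (.mem b C₂))
  | orX_l {y C₁ C₂} : Term.pos (.fmem y (.join C₁ C₂)) ∈ S → Deriv E A S (.pos (.fmem y C₁))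
  | orX_r {y C₁ C₂} : Term.pos (.fmem y (.join C₁ C₂)) ∈ S → Deriv E A S (.pos (.fmem y C₂))
  | boxR {b y C} : Term.pos (.mem b (.box C)) ∈ S → Term.pos (.fmem y C) ∈ S →
      Deriv E A S (.pos (.rbox b y))
  | diaR {b y C} : Term.pos (.fmem y (.dia C)) ∈ S → Term.pos (.mem b C) ∈ S →
      Deriv E A S (.pos (.rdia y b))
  /-- inverse rules for the connectives -/
  | andA_inv {b C₁ C₂} : Term.pos (.mem b C₁) ∈ S → Term.pos (.mem b C₂) ∈ S →
      Occurs (.meet C₁ C₂) A → Deriv E A S (.pos (.mem b (.meet C₁ C₂)))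
  | orX_inv {y C₁ C₂} : Term.pos (.fmem y C₁) ∈ S → Term.pos (.fmem y C₂) ∈ S →
      Occurs (.join C₁ C₂) A → Deriv E A S (.pos (.fmem y (.join C₁ C₂)))
  /-- adjunction rules -/
  | adj_box_l {b y} : Term.pos (.rbox b y) ∈ S → Deriv E A S (.pos (.rI (.bdia b) y))
  | adj_box_r {b y} : Term.pos (.rbox b y) ∈ S → Deriv E A S (.pos (.rI b (FtName.boxS y)))
  | adj_dia_l {b y} : Term.pos (.rdia y b) ∈ S → Deriv E A S (.pos (.rI (ObName.diaS b) y))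
  | adj_dia_r {b y} : Term.pos (.rdia y b) ∈ S → Deriv E A S (.pos (.rI b (.bbox y)))
  /-- I-compatibility rules -/
  | icomp_box {b y} : Term.pos (.rI b (FtName.boxS y)) ∈ S → Deriv E A S (.pos (.rbox b y))
  | icomp_bbox {b y} : Term.pos (.rI b (.bbox y)) ∈ S → Deriv E A S (.pos (.rdia y b))
  | icomp_dia {b y} : Term.pos (.rI (ObName.diaS b) y) ∈ S → Deriv E A S (.pos (.rdia y b))
  | icomp_bdia {b y} : Term.pos (.rI (.bdia b) y) ∈ S → Deriv E A S (.pos (.rbox b y))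
  /-- basic rules for negative assertions -/
  | neg_b {b C} : Term.neg (.mem b C) ∈ S → Deriv E A S (.neg (.rI b (.cls C)))
  | neg_x {y C} : Term.neg (.fmem y C) ∈ S → Deriv E A S (.neg (.rI (.cls C) y))
  /-- appending rules -/
  | app_x {b C} : Term.pos (.rI b (.cls C)) ∈ S → Deriv E A S (.pos (.mem b C))
  | app_a {y C} : Term.pos (.rI (.cls C) y) ∈ S → Deriv E A S (.pos (.fmem y C))
  /-- an additional expansion rule `E` -/
  | extra {t t'} : E t t' → t ∈ S → Deriv E A S t'

/-- `S` contains `A` and is closed under the expansion rules. -/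
def RuleClosed (E : Term → Term → Prop) (A S : Set Term) : Prop :=
  A ⊆ S ∧ ∀ t, Deriv E A S t → t ∈ S

/-- The tableaux completion `Ā` of the ABox `A` (w.r.t. the LE-ALC expansion
rules together with the extra rule `E`): the least set of terms containing
`A` and closed under the rules. -/
def Compl (E : Term → Term → Prop) (A : Set Term) : Set Term :=
  {t | ∀ S : Set Term, RuleClosed E A S → t ∈ S}

/-- No extra expansion rule: the plain LE-ALC tableaux algorithm. -/
def noExt : Term → Term → Prop := fun _ _ => False

/-- One expansion step of the tableaux algorithm: a rule is applied to the
current set `B` and adds a new term. -/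
def Step (E : Term → Term → Prop) (A B B' : Set Term) : Prop :=
  ∃ t, Deriv E A B t ∧ t ∉ B ∧ B' = insert t B

/-- A clash: some relational term occurs together with its negation. -/
def HasClash (S : Set Term) : Prop :=
  ∃ β : PTerm, β.IsRelational ∧ Term.pos β ∈ S ∧ Term.neg β ∈ S

/-- The separation rule `SA(b,d)`: from `b I x` infer `d I x`. -/
def ruleSA (b d : ObName) : Term → Term → Prop :=
  fun t t' => ∃ x : FtName, t = Term.pos (.rI b x) ∧ t' = Term.pos (.rI d x)

/-- The separation rule `SX(y,z)`: from `a I y` infer `a I z`. -/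
def ruleSX (y z : FtName) : Term → Term → Prop :=
  fun t t' => ∃ a : ObName, t = Term.pos (.rI a y) ∧ t' = Term.pos (.rI a z)

/-- The rule `SA(R_□,R_◇,b)`: from `b R_□ y` infer `y R_◇ b`. -/
def ruleSAR (b : ObName) : Term → Term → Prop :=
  fun t t' => ∃ x : FtName, t = Term.pos (.rbox b x) ∧ t' = Term.pos (.rdia x b)

/-- The rule `SX(R_◇,R_□,y)`: from `y R_◇ a` infer `a R_□ y`. -/
def ruleSXR (y : FtName) : Term → Term → Prop :=
  fun t t' => ∃ a : ObName, t = Term.pos (.rdia y a) ∧ t' = Term.pos (.rbox a y)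

/-! ## Semantics: enriched formal contexts -/

/-- `I^{(1)}[B]` -/
def gup {O F : Type} (I : O → F → Prop) (B : Set O) : Set F := {x | ∀ a ∈ B, I a x}

/-- `I^{(0)}[Y]` -/
def gdn {O F : Type} (I : O → F → Prop) (Y : Set F) : Set O := {a | ∀ x ∈ Y, I a x}

/-- Galois-stability for sets of objects. -/
def StableO {O F : Type} (I : O → F → Prop) (B : Set O) : Prop := gdn I (gup I B) = B

/-- Galois-stability for sets of features. -/
def StableF {O F : Type} (I : O → F → Prop) (Y : Set F) : Prop := gup I (gdn I Y) = Y

/-- An interpretation of LE-ALC: an enriched formal context `(Ob, Ft, I, R_□, R_◇)`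
together with interpretations of the individual names and of the atomic
concepts (an atomic concept is interpreted by the formal concept whose
extent is `vA n` and whose intent is `gup I (vA n)`). -/
structure Model where
  Ob : Type
  Ft : Type
  I : Ob → Ft → Prop
  Rb : Ob → Ft → Prop
  Rd : Ft → Ob → Prop
  oi : ObName → Ob
  fi : FtName → Ft
  vA : ℕ → Set Ob

/-- Intent of the interpretation of an atomic concept. -/
def Model.vX (M : Model) (n : ℕ) : Set M.Ft := gup M.I (M.vA n)

/-- Well-formedness of an interpretation: `R_□` and `R_◇` are `I`-compatible,
and atomic concepts are interpreted by formal concepts. -/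
def Model.Good (M : Model) : Prop :=
  (∀ x, StableO M.I {a | M.Rb a x}) ∧
  (∀ a, StableF M.I {x | M.Rb a x}) ∧
  (∀ a, StableF M.I {x | M.Rd x a}) ∧
  (∀ x, StableO M.I {a | M.Rd x a}) ∧
  (∀ n, StableO M.I (M.vA n))

/-- The interpretation `C^M = (extent, intent)` of a concept. -/
def Model.ci (M : Model) : Cpt → Set M.Ob × Set M.Ft
  | .atom n => (M.vA n, M.vX n)
  | .meet C₁ C₂ =>
      ((Model.ci M C₁).1 ∩ (Model.ci M C₂).1,
        gup M.I ((Model.ci M C₁).1 ∩ (Model.ci M C₂).1))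
  | .join C₁ C₂ =>
      (gdn M.I ((Model.ci M C₁).2 ∩ (Model.ci M C₂).2),
        (Model.ci M C₁).2 ∩ (Model.ci M C₂).2)
  | .box C =>
      (gdn M.Rb (Model.ci M C).2, gup M.I (gdn M.Rb (Model.ci M C).2))
  | .dia C =>
      (gdn M.I (gup (fun a x => M.Rd x a) (Model.ci M C).1),
        gup (fun a x => M.Rd x a) (Model.ci M C).1)

/-- Satisfaction of positive ABox terms. -/
def Model.SatP (M : Model) : PTerm → Prop
  | .rI b y => M.I (M.oi b) (M.fi y)
  | .rbox b y => M.Rb (M.oi b) (M.fi y)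
  | .rdia y b => M.Rd (M.fi y) (M.oi b)
  | .mem b C => M.oi b ∈ (Model.ci M C).1
  | .fmem y C => M.fi y ∈ (Model.ci M C).2

/-- Satisfaction of ABox terms. -/
def Model.Sat (M : Model) : Term → Prop
  | .pos t => M.SatP t
  | .neg t => ¬ M.SatP t

/-- `M` is a model of the set of terms `A`. -/
def Model.SatAll (M : Model) (A : Set Term) : Prop := ∀ t ∈ A, M.Sat t

/-- An ABox is consistent iff it has a model. -/
def Consistent (A : Set Term) : Prop := ∃ M : Model, M.Good ∧ M.SatAll A

/-- `A ⊨ t`: every model of `A` satisfies `t`. -/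
def Entails (A : Set Term) (t : Term) : Prop :=
  ∀ M : Model, M.Good → M.SatAll A → M.Sat t

/-- `A ⊨ C₁ ⊑ C₂`: in every model of `A`, `C₁^M ≤ C₂^M` in the concept lattice. -/
def EntailsSub (A : Set Term) (C₁ C₂ : Cpt) : Prop :=
  ∀ M : Model, M.Good → M.SatAll A → (Model.ci M C₁).1 ⊆ (Model.ci M C₂).1

/-! ### Semantic concept operations -/

/-- The operation `[R_□]` on (extent, intent) pairs. -/
def Model.cbox (M : Model) (c : Set M.Ob × Set M.Ft) : Set M.Ob × Set M.Ft :=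
  (gdn M.Rb c.2, gup M.I (gdn M.Rb c.2))

/-- The operation `⟨R_◇⟩` on (extent, intent) pairs. -/
def Model.cdia (M : Model) (c : Set M.Ob × Set M.Ft) : Set M.Ob × Set M.Ft :=
  (gdn M.I (gup (fun a x => M.Rd x a) c.1), gup (fun a x => M.Rd x a) c.1)

/-- The operation `◆` (left adjoint of `[R_□]`). -/
def Model.cbdia (M : Model) (c : Set M.Ob × Set M.Ft) : Set M.Ob × Set M.Ft :=
  (gdn M.I (gup M.Rb c.1), gup M.Rb c.1)

/-- The operation `■` (right adjoint of `⟨R_◇⟩`). -/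
def Model.cbbox (M : Model) (c : Set M.Ob × Set M.Ft) : Set M.Ob × Set M.Ft :=
  (gdn (fun a x => M.Rd x a) c.2, gup M.I (gdn (fun a x => M.Rd x a) c.2))

/-- The concept `𝐚 = (a^{↑↓}, a^{↑})` generated by an object. -/
def Model.genO (M : Model) (a : M.Ob) : Set M.Ob × Set M.Ft :=
  (gdn M.I (gup M.I {a}), gup M.I {a})

/-- The concept `𝐱 = (x^{↓}, x^{↓↑})` generated by a feature. -/
def Model.genF (M : Model) (x : M.Ft) : Set M.Ob × Set M.Ft :=
  (gdn M.I {x}, gup M.I (gdn M.I {x}))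

/-- The concept companion `con(b)` of an object name, interpreted in `M`. -/
def Model.conO (M : Model) : ObName → Set M.Ob × Set M.Ft
  | .base n => M.genO (M.oi (.base n))
  | .cls C => M.genO (M.oi (.cls C))
  | .dia b => M.cdia (Model.conO M b)
  | .bdia b => M.cbdia (Model.conO M b)

/-- The concept companion `con(y)` of a feature name, interpreted in `M`. -/
def Model.conF (M : Model) : FtName → Set M.Ob × Set M.Ft
  | .base n => M.genF (M.fi (.base n))
  | .cls C => M.genF (M.fi (.cls C))
  | .box y => M.cbox (Model.conF M y)
  | .bbox y => M.cbbox (Model.conF M y)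

/-! ### The canonical model built from the tableaux completion -/

/-- Classical `dite`. -/
noncomputable def cdite {α : Sort*} (p : Prop) (f : p → α) (g : ¬ p → α) : α :=
  @dite α p (Classical.dec p) f g

/-- The canonical model built from the tableaux completion `Ā` of `A`:
its objects (resp. features) are the object (resp. feature) names occurring
in `Ā` (plus a dummy point interpreting the names not occurring in `Ā`),
every name occurring in `Ā` is interpreted by itself, the relations are read
off from `Ā`, and an atomic concept `D` is interpreted by the formal concept
`(x_D^↓, a_D^↑)`. -/
noncomputable def canModel (A : Finset Term) : Model where
  Ob := Option {b : ObName // ObOccurs b (Compl noExt ↑A)}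
  Ft := Option {y : FtName // FtOccurs y (Compl noExt ↑A)}
  I := fun o x => ∃ b y, o = some b ∧ x = some y ∧
        Term.pos (.rI b.1 y.1) ∈ Compl noExt ↑A
  Rb := fun o x => ∃ b y, o = some b ∧ x = some y ∧
        Term.pos (.rbox b.1 y.1) ∈ Compl noExt ↑A
  Rd := fun x o => ∃ b y, o = some b ∧ x = some y ∧
        Term.pos (.rdia y.1 b.1) ∈ Compl noExt ↑A
  oi := fun b => cdite (ObOccurs b (Compl noExt ↑A)) (fun h => some ⟨b, h⟩) (fun _ => none)
  fi := fun y => cdite (FtOccurs y (Compl noExt ↑A)) (fun h => some ⟨y, h⟩) (fun _ => none)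
  vA := fun n => {o | ∃ b, o = some b ∧
        Term.pos (.rI b.1 (.cls (.atom n))) ∈ Compl noExt ↑A}

/-! ### ◇-leading and □-leading concepts -/

/-- ◇-leading concepts. -/
inductive DiaLeading : Cpt → Prop
  | atom (n : ℕ) : DiaLeading (.dia (.atom n))
  | dia {C : Cpt} : DiaLeading C → DiaLeading (.dia C)
  | join {C : Cpt} (C₁ : Cpt) : DiaLeading C → DiaLeading (.join C C₁)
  | meet {C₁ C₂ : Cpt} : DiaLeading C₁ → DiaLeading C₂ → DiaLeading (.meet C₁ C₂)

/-- □-leading concepts. -/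
inductive BoxLeading : Cpt → Prop
  | atom (n : ℕ) : BoxLeading (.box (.atom n))
  | box {C : Cpt} : BoxLeading C → BoxLeading (.box C)
  | meet {C : Cpt} (C₁ : Cpt) : BoxLeading C → BoxLeading (.meet C C₁)
  | join {C₁ C₂ : Cpt} : BoxLeading C₁ → BoxLeading C₂ → BoxLeading (.join C₁ C₂)


/-! ### Auxiliary development -/

section Galois

variable {O F : Type}

theorem gup_anti (I : O → F → Prop) {S T : Set O} (h : S ⊆ T) : gup I T ⊆ gup I S :=
  fun _ hx a ha => hx a (h ha)

theorem gdn_anti (I : O → F → Prop) {Y Z : Set F} (h : Y ⊆ Z) : gdn I Z ⊆ gdn I Y :=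
  fun _ ha x hx => ha x (h hx)

theorem subset_gdn_gup (I : O → F → Prop) (S : Set O) : S ⊆ gdn I (gup I S) :=
  fun _ ha x hx => hx _ ha

theorem subset_gup_gdn (I : O → F → Prop) (Y : Set F) : Y ⊆ gup I (gdn I Y) :=
  fun _ hx a ha => ha _ hx

theorem gdngup_mono (I : O → F → Prop) {S T : Set O} (h : S ⊆ T) :
    gdn I (gup I S) ⊆ gdn I (gup I T) := gdn_anti I (gup_anti I h)

theorem gupgdn_mono (I : O → F → Prop) {Y Z : Set F} (h : Y ⊆ Z) :
    gup I (gdn I Y) ⊆ gup I (gdn I Z) := gup_anti I (gdn_anti I h)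

theorem stableO_gdn (I : O → F → Prop) (Y : Set F) : StableO I (gdn I Y) := by
  apply Set.Subset.antisymm
  · exact gdn_anti I (subset_gup_gdn I Y)
  · exact subset_gdn_gup I _

theorem stableF_gup (I : O → F → Prop) (S : Set O) : StableF I (gup I S) := by
  apply Set.Subset.antisymm
  · exact gup_anti I (subset_gdn_gup I S)
  · exact subset_gup_gdn I _

/-- closure of a subset of a stable set is contained in it -/
theorem cl_subsetO (I : O → F → Prop) {S T : Set O} (hST : S ⊆ T) (hT : StableO I T) :
    gdn I (gup I S) ⊆ T := by
  intro a ha; rw [← hT]; exact gdngup_mono I hST ha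

theorem cl_subsetF (I : O → F → Prop) {Y Z : Set F} (hYZ : Y ⊆ Z) (hZ : StableF I Z) :
    gup I (gdn I Y) ⊆ Z := by
  intro x hx; rw [← hZ]; exact gupgdn_mono I hYZ hx

/-- `gdn R Y` is an intersection of `R`-columns, hence stable whenever columns are. -/
theorem stableO_gdnR (I : O → F → Prop) (R : O → F → Prop)
    (h : ∀ x, StableO I {a | R a x}) (Y : Set F) : StableO I (gdn R Y) := by
  apply Set.Subset.antisymm
  · intro a ha x hx
    have hsub : gdn R Y ⊆ {a | R a x} := by intro a' ha'; exact ha' x hx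
    exact cl_subsetO I hsub (h x) ha
  · exact subset_gdn_gup I _

theorem stableF_gupR (I : O → F → Prop) (R : O → F → Prop)
    (h : ∀ a, StableF I {x | R a x}) (S : Set O) : StableF I (gup R S) := by
  apply Set.Subset.antisymm
  · intro x hx a ha
    have hsub : gup R S ⊆ {x | R a x} := by intro x' hx'; exact hx' a ha
    exact cl_subsetF I hsub (h a) hx
  · exact subset_gup_gdn I _

theorem clO_single_subset (I : O → F → Prop) {S : Set O} (hS : StableO I S) {a : O}
    (h : a ∈ S) : gdn I (gup I {a}) ⊆ S :=
  cl_subsetO I (Set.singleton_subset_iff.mpr h) hS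

theorem clF_single_subset (I : O → F → Prop) {Y : Set F} (hY : StableF I Y) {x : F}
    (h : x ∈ Y) : gup I (gdn I {x}) ⊆ Y :=
  cl_subsetF I (Set.singleton_subset_iff.mpr h) hY

end Galois

/-- In a good model every concept interpretation is a formal concept. -/
theorem ci_spec (M : Model) (hg : M.Good) :
    ∀ C, (M.ci C).2 = gup M.I (M.ci C).1 ∧ (M.ci C).1 = gdn M.I (M.ci C).2 := by
  obtain ⟨g1, g2, g3, g4, g5⟩ := hg
  intro C
  induction C with
  | atom n => exact ⟨rfl, (g5 n).symm⟩
  | meet C₁ C₂ ih₁ ih₂ =>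
    refine ⟨rfl, Set.Subset.antisymm (subset_gdn_gup _ _) ?_⟩
    have h₁ : StableO M.I (M.ci C₁).1 := ih₁.2 ▸ stableO_gdn M.I _
    have h₂ : StableO M.I (M.ci C₂).1 := ih₂.2 ▸ stableO_gdn M.I _
    intro a ha
    exact ⟨cl_subsetO M.I Set.inter_subset_left h₁ ha,
           cl_subsetO M.I Set.inter_subset_right h₂ ha⟩
  | join C₁ C₂ ih₁ ih₂ =>
    refine ⟨Set.Subset.antisymm (subset_gup_gdn _ _) ?_, rfl⟩
    have h₁ : StableF M.I (M.ci C₁).2 := ih₁.1 ▸ stableF_gup M.I _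
    have h₂ : StableF M.I (M.ci C₂).2 := ih₂.1 ▸ stableF_gup M.I _
    intro x hx
    exact ⟨cl_subsetF M.I Set.inter_subset_left h₁ hx,
           cl_subsetF M.I Set.inter_subset_right h₂ hx⟩
  | box C ih =>
    exact ⟨rfl, (stableO_gdnR M.I M.Rb g1 _).symm⟩
  | dia C ih =>
    exact ⟨(stableF_gupR M.I (fun a x => M.Rd x a) g3 _).symm, rfl⟩

theorem ci_stableO (M : Model) (hg : M.Good) (C : Cpt) : StableO M.I (M.ci C).1 := by
  rw [(ci_spec M hg C).2]; exact stableO_gdn M.I _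

theorem ci_stableF (M : Model) (hg : M.Good) (C : Cpt) : StableF M.I (M.ci C).2 := by
  rw [(ci_spec M hg C).1]; exact stableF_gup M.I _

/-! ### The tableaux completion -/

theorem compl_subset (E : Term → Term → Prop) (A : Set Term) : A ⊆ Compl E A :=
  fun _ ht S hS => hS.1 ht

theorem compl_min {E : Term → Term → Prop} {A S : Set Term} (hS : RuleClosed E A S) :
    Compl E A ⊆ S := fun _ ht => ht S hS

theorem deriv_mono {E : Term → Term → Prop} {A S S' : Set Term} {t : Term}
    (hS : S ⊆ S') (d : Deriv E A S t) : Deriv E A S' t := by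
  cases d with
  | create_a h => exact .create_a h
  | create_x h => exact .create_x h
  | basic h1 h2 => exact .basic (hS h1) (hS h2)
  | andA_l h => exact .andA_l (hS h)
  | andA_r h => exact .andA_r (hS h)
  | orX_l h => exact .orX_l (hS h)
  | orX_r h => exact .orX_r (hS h)
  | boxR h1 h2 => exact .boxR (hS h1) (hS h2)
  | diaR h1 h2 => exact .diaR (hS h1) (hS h2)
  | andA_inv h1 h2 h3 => exact .andA_inv (hS h1) (hS h2) h3
  | orX_inv h1 h2 h3 => exact .orX_inv (hS h1) (hS h2) h3
  | adj_box_l h => exact .adj_box_l (hS h)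
  | adj_box_r h => exact .adj_box_r (hS h)
  | adj_dia_l h => exact .adj_dia_l (hS h)
  | adj_dia_r h => exact .adj_dia_r (hS h)
  | icomp_box h => exact .icomp_box (hS h)
  | icomp_bbox h => exact .icomp_bbox (hS h)
  | icomp_dia h => exact .icomp_dia (hS h)
  | icomp_bdia h => exact .icomp_bdia (hS h)
  | neg_b h => exact .neg_b (hS h)
  | neg_x h => exact .neg_x (hS h)
  | app_x h => exact .app_x (hS h)
  | app_a h => exact .app_a (hS h)
  | extra he h => exact .extra he (hS h)

theorem compl_closed (E : Term → Term → Prop) (A : Set Term) :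
    RuleClosed E A (Compl E A) := by
  refine ⟨compl_subset E A, fun t d => ?_⟩
  intro S hS
  refine hS.2 t (deriv_mono ?_ d)
  intro u hu
  exact hu S hS

/-! ### Concept companions and soundness of the rules -/

/-- Extent of the concept companion of an object name. -/
def oext (M : Model) : ObName → Set M.Ob
  | .base n => gdn M.I (gup M.I {M.oi (.base n)})
  | .cls C => (M.ci C).1
  | .dia b => gdn M.I (gup (fun a x => M.Rd x a) (oext M b))
  | .bdia b => gdn M.I (gup M.Rb (oext M b))

/-- Intent of the concept companion of a feature name. -/
def fint (M : Model) : FtName → Set M.Ft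
  | .base n => gup M.I (gdn M.I {M.fi (.base n)})
  | .cls C => (M.ci C).2
  | .box y => gup M.I (gdn M.Rb (fint M y))
  | .bbox y => gup M.I (gdn (fun a x => M.Rd x a) (fint M y))

/-- Companion-based satisfaction of positive terms. -/
def SatC (M : Model) : PTerm → Prop
  | .rI b y => ∀ a ∈ oext M b, ∀ x ∈ fint M y, M.I a x
  | .rbox b y => ∀ a ∈ oext M b, ∀ x ∈ fint M y, M.Rb a x
  | .rdia y b => ∀ a ∈ oext M b, ∀ x ∈ fint M y, M.Rd x a
  | .mem b C => oext M b ⊆ (M.ci C).1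
  | .fmem y C => fint M y ⊆ (M.ci C).2

theorem fint_boxS (M : Model) (y : FtName) :
    fint M (FtName.boxS y) = gup M.I (gdn M.Rb (fint M y)) := by
  cases y <;> rfl

theorem oext_diaS (M : Model) (b : ObName) :
    oext M (ObName.diaS b) = gdn M.I (gup (fun a x => M.Rd x a) (oext M b)) := by
  cases b <;> rfl

theorem mem_oext_base (M : Model) (n : ℕ) : M.oi (.base n) ∈ oext M (.base n) :=
  subset_gdn_gup _ _ rfl

theorem mem_fint_base (M : Model) (n : ℕ) : M.fi (.base n) ∈ fint M (.base n) :=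
  subset_gup_gdn _ _ rfl

/-- Companion satisfaction agrees with plain satisfaction on plain terms. -/
theorem satC_of_satP (M : Model) (hg : M.Good) {p : PTerm}
    (hobj : ∀ b ∈ p.objs, b.IsBase) (hft : ∀ y ∈ p.feats, y.IsBase)
    (h : M.SatP p) : SatC M p := by
  obtain ⟨g1, g2, g3, g4, g5⟩ := hg
  cases p with
  | rI b y =>
    obtain ⟨n, rfl⟩ := hobj b (by simp [PTerm.objs])
    obtain ⟨m, rfl⟩ := hft y (by simp [PTerm.feats])
    intro a ha x hx
    have hb : M.oi (.base n) ∈ gdn M.I {M.fi (.base m)} := by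
      intro x' hx'; replace hx' := Set.mem_singleton_iff.mp hx'; subst hx'; exact h
    have ha' : a ∈ gdn M.I {M.fi (.base m)} :=
      clO_single_subset M.I (stableO_gdn M.I _) hb ha
    exact hx a ha'
  | rbox b y =>
    obtain ⟨n, rfl⟩ := hobj b (by simp [PTerm.objs])
    obtain ⟨m, rfl⟩ := hft y (by simp [PTerm.feats])
    intro a ha x hx
    have h1 : a ∈ {a | M.Rb a (M.fi (.base m))} :=
      clO_single_subset M.I (g1 _) (by exact h) ha
    have h2 : x ∈ {x | M.Rb a x} :=
      clF_single_subset M.I (g2 a) (by exact h1) hx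
    exact h2
  | rdia y b =>
    obtain ⟨m, rfl⟩ := hft y (by simp [PTerm.feats])
    obtain ⟨n, rfl⟩ := hobj b (by simp [PTerm.objs])
    intro a ha x hx
    have h1 : a ∈ {a | M.Rd (M.fi (.base m)) a} :=
      clO_single_subset M.I (g4 _) (by exact h) ha
    have h2 : x ∈ {x | M.Rd x a} :=
      clF_single_subset M.I (g3 a) (by exact h1) hx
    exact h2
  | mem b C =>
    obtain ⟨n, rfl⟩ := hobj b (by simp [PTerm.objs])
    exact clO_single_subset M.I (ci_stableO M ⟨g1,g2,g3,g4,g5⟩ C) h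
  | fmem y C =>
    obtain ⟨m, rfl⟩ := hft y (by simp [PTerm.feats])
    exact clF_single_subset M.I (ci_stableF M ⟨g1,g2,g3,g4,g5⟩ C) h

theorem satP_of_satC (M : Model) {p : PTerm}
    (hobj : ∀ b ∈ p.objs, b.IsBase) (hft : ∀ y ∈ p.feats, y.IsBase)
    (h : SatC M p) : M.SatP p := by
  cases p with
  | rI b y =>
    obtain ⟨n, rfl⟩ := hobj b (by simp [PTerm.objs])
    obtain ⟨m, rfl⟩ := hft y (by simp [PTerm.feats])
    exact h _ (mem_oext_base M n) _ (mem_fint_base M m)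
  | rbox b y =>
    obtain ⟨n, rfl⟩ := hobj b (by simp [PTerm.objs])
    obtain ⟨m, rfl⟩ := hft y (by simp [PTerm.feats])
    exact h _ (mem_oext_base M n) _ (mem_fint_base M m)
  | rdia y b =>
    obtain ⟨n, rfl⟩ := hobj b (by simp [PTerm.objs])
    obtain ⟨m, rfl⟩ := hft y (by simp [PTerm.feats])
    exact h _ (mem_oext_base M n) _ (mem_fint_base M m)
  | mem b C =>
    obtain ⟨n, rfl⟩ := hobj b (by simp [PTerm.objs])
    exact h (mem_oext_base M n)
  | fmem y C =>
    obtain ⟨m, rfl⟩ := hft y (by simp [PTerm.feats])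
    exact h (mem_fint_base M m)

/-- Invariant for the soundness of the expansion rules. -/
def TInv (M : Model) : Term → Prop
  | .pos p => SatC M p
  | .neg _ => True

/-- Soundness: all positive terms of the completion hold in the companion
semantics of any good model of the input ABox. -/
theorem compl_satC (M : Model) (hg : M.Good) {A : Set Term}
    (hA : ∀ t ∈ A, M.Sat t) (hplain : ∀ t ∈ A, t.Plain) :
    ∀ p : PTerm, Term.pos p ∈ Compl noExt A → SatC M p := by
  obtain ⟨g1, g2, g3, g4, g5⟩ := hg
  have hg' : M.Good := ⟨g1, g2, g3, g4, g5⟩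
  have key : RuleClosed noExt A {t | TInv M t} := by
    constructor
    · intro t ht
      cases t with
      | pos p =>
        exact satC_of_satP M hg' (hplain _ ht).1 (hplain _ ht).2 (hA _ ht)
      | neg p => trivial
    · intro t d
      cases d with
      | create_a h => exact Set.Subset.rfl
      | create_x h => exact Set.Subset.rfl
      | @basic b y C h1 h2 =>
        intro a ha x hx
        have h2' : x ∈ gup M.I (M.ci C).1 := (ci_spec M hg' C).1 ▸ h2 hx
        exact h2' a (h1 ha)
      | andA_l h => exact fun a ha => (h ha).1
      | andA_r h => exact fun a ha => (h ha).2
      | orX_l h => exact fun x hx => (h hx).1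
      | orX_r h => exact fun x hx => (h hx).2
      | boxR h1 h2 => exact fun a ha x hx => (h1 ha) x (h2 hx)
      | diaR h1 h2 => exact fun a ha x hx => (h1 hx) a (h2 ha)
      | andA_inv h1 h2 h3 => exact fun a ha => ⟨h1 ha, h2 ha⟩
      | orX_inv h1 h2 h3 => exact fun x hx => ⟨h1 hx, h2 hx⟩
      | adj_box_l h =>
        intro a ha x hx
        refine ha x ?_
        intro a' ha'
        exact h a' ha' x hx
      | adj_box_r h =>
        intro a ha x hx
        rw [fint_boxS] at hx
        refine hx a ?_
        intro x' hx'
        exact h a ha x' hx'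
      | adj_dia_l h =>
        intro a ha x hx
        rw [oext_diaS] at ha
        refine ha x ?_
        intro a' ha'
        exact h a' ha' x hx
      | adj_dia_r h =>
        intro a ha x hx
        refine hx a ?_
        intro x' hx'
        exact h a ha x' hx'
      | @icomp_box b y h =>
        intro a ha x hx
        have ha2 : a ∈ gdn M.I (gup M.I (gdn M.Rb (fint M y))) := by
          intro x' hx'
          exact h a ha x' (by rw [fint_boxS]; exact hx')
        rw [stableO_gdnR M.I M.Rb g1 (fint M y)] at ha2
        exact ha2 x hx
      | @icomp_bbox b y h =>
        intro a ha x hx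
        have ha2 : a ∈ gdn M.I (gup M.I (gdn (fun a x => M.Rd x a) (fint M y))) := by
          intro x' hx'
          exact h a ha x' hx'
        rw [stableO_gdnR M.I (fun a x => M.Rd x a) g4 (fint M y)] at ha2
        exact ha2 x hx
      | @icomp_dia b y h =>
        intro a ha x hx
        have hx2 : x ∈ gup M.I (gdn M.I (gup (fun a x => M.Rd x a) (oext M b))) := by
          intro a' ha'
          exact h a' (by rw [oext_diaS]; exact ha') x hx
        rw [stableF_gupR M.I (fun a x => M.Rd x a) g3 (oext M b)] at hx2
        exact hx2 a ha
      | @icomp_bdia b y h =>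
        intro a ha x hx
        have hx2 : x ∈ gup M.I (gdn M.I (gup M.Rb (oext M b))) := by
          intro a' ha'
          exact h a' ha' x hx
        rw [stableF_gupR M.I M.Rb g2 (oext M b)] at hx2
        exact hx2 a ha
      | neg_b h => trivial
      | neg_x h => trivial
      | @app_x b C h =>
        intro a ha
        rw [(ci_spec M hg' C).2]
        intro x hx
        exact h a ha x hx
      | @app_a y C h =>
        intro x hx
        rw [(ci_spec M hg' C).1]
        intro a ha
        exact h a ha x hx
      | extra he h => exact he.elim
  intro p hp
  exact compl_min key hp

/-! ### Subconcepts and occurrence -/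

theorem mem_subs_self (C : Cpt) : C ∈ C.subs := by
  cases C <;> simp [Cpt.subs]

theorem subs_subset {C : Cpt} : ∀ {D : Cpt}, D ∈ C.subs → D.subs ⊆ C.subs := by
  induction C with
  | atom n =>
    intro D h
    simp [Cpt.subs] at h
    subst h
    exact Finset.Subset.refl _
  | meet C₁ C₂ ih₁ ih₂ =>
    intro D h
    simp only [Cpt.subs, Finset.mem_insert, Finset.mem_union] at h
    rcases h with h | h | h
    · subst h; exact Finset.Subset.refl _
    · refine (ih₁ h).trans ?_
      intro x hx
      simp only [Cpt.subs, Finset.mem_insert, Finset.mem_union]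
      exact Or.inr (Or.inl hx)
    · refine (ih₂ h).trans ?_
      intro x hx
      simp only [Cpt.subs, Finset.mem_insert, Finset.mem_union]
      exact Or.inr (Or.inr hx)
  | join C₁ C₂ ih₁ ih₂ =>
    intro D h
    simp only [Cpt.subs, Finset.mem_insert, Finset.mem_union] at h
    rcases h with h | h | h
    · subst h; exact Finset.Subset.refl _
    · refine (ih₁ h).trans ?_
      intro x hx
      simp only [Cpt.subs, Finset.mem_insert, Finset.mem_union]
      exact Or.inr (Or.inl hx)
    · refine (ih₂ h).trans ?_
      intro x hx
      simp only [Cpt.subs, Finset.mem_insert, Finset.mem_union]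
      exact Or.inr (Or.inr hx)
  | box C ih =>
    intro D h
    simp only [Cpt.subs, Finset.mem_insert] at h
    rcases h with h | h
    · subst h; exact Finset.Subset.refl _
    · exact (ih h).trans (fun x hx => Finset.mem_insert_of_mem hx)
  | dia C ih =>
    intro D h
    simp only [Cpt.subs, Finset.mem_insert] at h
    rcases h with h | h
    · subst h; exact Finset.Subset.refl _
    · exact (ih h).trans (fun x hx => Finset.mem_insert_of_mem hx)

theorem cpts_closed {t : Term} {C D : Cpt} (hC : C ∈ t.cpts) (hD : D ∈ C.subs) :
    D ∈ t.cpts := by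
  cases t with
  | pos p => cases p <;> simp [Term.cpts] at hC ⊢ <;> exact subs_subset hC hD
  | neg p => cases p <;> simp [Term.cpts] at hC ⊢ <;> exact subs_subset hC hD

theorem occurs_mono {C : Cpt} {A B : Set Term} (h : A ⊆ B) (hC : Occurs C A) :
    Occurs C B := by
  obtain ⟨t, ht, hc⟩ := hC
  exact ⟨t, h ht, hc⟩

theorem occurs_of_subs {A : Set Term} {C D : Cpt} (hC : Occurs C A) (hD : D ∈ C.subs) :
    Occurs D A := by
  obtain ⟨t, ht, hc⟩ := hC
  exact ⟨t, ht, cpts_closed hc hD⟩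

theorem Occurs.meet_left {A : Set Term} {C₁ C₂ : Cpt} (h : Occurs (.meet C₁ C₂) A) :
    Occurs C₁ A :=
  occurs_of_subs h (by simp [Cpt.subs, mem_subs_self])

theorem Occurs.meet_right {A : Set Term} {C₁ C₂ : Cpt} (h : Occurs (.meet C₁ C₂) A) :
    Occurs C₂ A :=
  occurs_of_subs h (by simp [Cpt.subs, mem_subs_self])

theorem Occurs.join_left {A : Set Term} {C₁ C₂ : Cpt} (h : Occurs (.join C₁ C₂) A) :
    Occurs C₁ A :=
  occurs_of_subs h (by simp [Cpt.subs, mem_subs_self])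

theorem Occurs.join_right {A : Set Term} {C₁ C₂ : Cpt} (h : Occurs (.join C₁ C₂) A) :
    Occurs C₂ A :=
  occurs_of_subs h (by simp [Cpt.subs, mem_subs_self])

theorem Occurs.of_box {A : Set Term} {C : Cpt} (h : Occurs (.box C) A) : Occurs C A :=
  occurs_of_subs h (by simp [Cpt.subs, mem_subs_self])

theorem Occurs.of_dia {A : Set Term} {C : Cpt} (h : Occurs (.dia C) A) : Occurs C A :=
  occurs_of_subs h (by simp [Cpt.subs, mem_subs_self])

/-! ### Basic properties of the canonical model -/

/-- The completion of a finite ABox. -/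
def KSet (B : Finset Term) : Set Term := Compl noExt ↑B

theorem KB_step {B : Finset Term} {t : Term}
    (d : Deriv noExt ↑B (KSet B) t) : t ∈ KSet B :=
  (compl_closed noExt ↑B).2 t d

theorem mem_KB {B : Finset Term} {t : Term} (h : t ∈ B) : t ∈ KSet B :=
  compl_subset noExt ↑B (Finset.mem_coe.mpr h)

theorem canI_some {B : Finset Term} {b : {b // ObOccurs b (KSet B)}}
    {y : {y // FtOccurs y (KSet B)}} :
    (canModel B).I (some b) (some y) ↔ Term.pos (.rI b.1 y.1) ∈ KSet B := by
  constructor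
  · rintro ⟨b', y', hb, hy, h⟩
    replace hb := Option.some.inj hb; replace hy := Option.some.inj hy
    subst hb; subst hy
    exact h
  · intro h
    exact ⟨b, y, rfl, rfl, h⟩

theorem canRb_some {B : Finset Term} {b : {b // ObOccurs b (KSet B)}}
    {y : {y // FtOccurs y (KSet B)}} :
    (canModel B).Rb (some b) (some y) ↔ Term.pos (.rbox b.1 y.1) ∈ KSet B := by
  constructor
  · rintro ⟨b', y', hb, hy, h⟩
    replace hb := Option.some.inj hb; replace hy := Option.some.inj hy
    subst hb; subst hy
    exact h
  · intro h
    exact ⟨b, y, rfl, rfl, h⟩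

theorem canRd_some {B : Finset Term} {b : {b // ObOccurs b (KSet B)}}
    {y : {y // FtOccurs y (KSet B)}} :
    (canModel B).Rd (some y) (some b) ↔ Term.pos (.rdia y.1 b.1) ∈ KSet B := by
  constructor
  · rintro ⟨b', y', hb, hy, h⟩
    replace hb := Option.some.inj hb; replace hy := Option.some.inj hy
    subst hb; subst hy
    exact h
  · intro h
    exact ⟨b, y, rfl, rfl, h⟩

theorem canI_none_right {B : Finset Term} {o : (canModel B).Ob} :
    ¬ (canModel B).I o none := by
  rintro ⟨b', y', _, hy, _⟩
  cases hy

theorem canI_none_left {B : Finset Term} {x : (canModel B).Ft} :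
    ¬ (canModel B).I none x := by
  rintro ⟨b', y', hb, _, _⟩
  cases hb

theorem can_stableO_empty (B : Finset Term) : StableO (canModel B).I ∅ := by
  apply Set.Subset.antisymm
  · intro o ho
    have : (canModel B).I o none := ho none (fun a ha => absurd ha (Set.notMem_empty a))
    exact absurd this canI_none_right
  · exact Set.empty_subset _

theorem can_stableF_empty (B : Finset Term) : StableF (canModel B).I ∅ := by
  apply Set.Subset.antisymm
  · intro x hx
    have : (canModel B).I none x := hx none (fun a ha => absurd ha (Set.notMem_empty a))
    exact absurd this canI_none_left
  · exact Set.empty_subset _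

/-! ### Goodness of the canonical model -/

theorem canModel_good (B : Finset Term) : (canModel B).Good := by
  refine ⟨?_, ?_, ?_, ?_, ?_⟩
  · -- Rb-columns are stable
    intro x
    match x with
    | none =>
      have he : {a | (canModel B).Rb a none} = ∅ := by
        apply Set.eq_empty_iff_forall_notMem.mpr
        rintro o ⟨b', y', _, hy, _⟩
        cases hy
      rw [he]; exact can_stableO_empty B
    | some y' =>
      by_cases h : ∃ b₀ : ObName, Term.pos (.rbox b₀ y'.1) ∈ KSet B
      · obtain ⟨b₀, hb₀⟩ := h
        have hrI : Term.pos (.rI b₀ (FtName.boxS y'.1)) ∈ KSet B :=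
          KB_step (.adj_box_r hb₀)
        have hocc : FtOccurs (FtName.boxS y'.1) (KSet B) :=
          ⟨_, hrI, by simp [Term.feats, PTerm.feats]⟩
        have hcol : {a | (canModel B).Rb a (some y')} =
            gdn (canModel B).I {some ⟨FtName.boxS y'.1, hocc⟩} := by
          ext o
          constructor
          · rintro ⟨b', y'', hb, hy, h'⟩
            rw [Option.some_inj] at hy
            subst hb; subst hy
            intro x' hx'
            replace hx' := Set.mem_singleton_iff.mp hx'
            subst hx'
            exact canI_some.mpr (KB_step (.adj_box_r h'))
          · intro ho
            have hIx := ho _ (Set.mem_singleton _)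
            rcases hIx with ⟨b', y'', hb, hy, h'⟩
            rw [Option.some_inj] at hy
            subst hb
            have h'' : Term.pos (.rI b'.1 (FtName.boxS y'.1)) ∈ KSet B := by
              have : y''.1 = FtName.boxS y'.1 := by rw [← hy]
              rwa [this] at h'
            exact ⟨b', y', rfl, rfl, KB_step (.icomp_box h'')⟩
        rw [hcol]; exact stableO_gdn _ _
      · have he : {a | (canModel B).Rb a (some y')} = ∅ := by
          apply Set.eq_empty_iff_forall_notMem.mpr
          rintro o ⟨b', y'', hb, hy, h'⟩
          rw [Option.some_inj] at hy
          subst hy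
          exact h ⟨b'.1, h'⟩
        rw [he]; exact can_stableO_empty B
  · -- Rb-rows are stable
    intro o
    match o with
    | none =>
      have he : {x | (canModel B).Rb none x} = ∅ := by
        apply Set.eq_empty_iff_forall_notMem.mpr
        rintro x ⟨b', y', hb, _, _⟩
        cases hb
      rw [he]; exact can_stableF_empty B
    | some b' =>
      by_cases h : ∃ y₀ : FtName, Term.pos (.rbox b'.1 y₀) ∈ KSet B
      · obtain ⟨y₀, hy₀⟩ := h
        have hrI : Term.pos (.rI (ObName.bdia b'.1) y₀) ∈ KSet B :=
          KB_step (.adj_box_l hy₀)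
        have hocc : ObOccurs (ObName.bdia b'.1) (KSet B) :=
          ⟨_, hrI, by simp [Term.objs, PTerm.objs]⟩
        have hrow : {x | (canModel B).Rb (some b') x} =
            gup (canModel B).I {some ⟨ObName.bdia b'.1, hocc⟩} := by
          ext x
          constructor
          · rintro ⟨b'', y'', hb, hy, h'⟩
            rw [Option.some_inj] at hb
            subst hb; subst hy
            intro a' ha'
            replace ha' := Set.mem_singleton_iff.mp ha'
            subst ha'
            exact canI_some.mpr (KB_step (.adj_box_l h'))
          · intro hx
            have hIx := hx _ (Set.mem_singleton _)
            rcases hIx with ⟨b'', y'', hb, hy, h'⟩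
            subst hy
            have hbe : b''.1 = ObName.bdia b'.1 := by
              have := Option.some_inj.mp hb
              rw [← this]
            rw [hbe] at h'
            exact ⟨b', y'', rfl, rfl, KB_step (.icomp_bdia h')⟩
        rw [hrow]; exact stableF_gup _ _
      · have he : {x | (canModel B).Rb (some b') x} = ∅ := by
          apply Set.eq_empty_iff_forall_notMem.mpr
          rintro x ⟨b'', y'', hb, hy, h'⟩
          rw [Option.some_inj] at hb
          subst hb
          exact h ⟨y''.1, h'⟩
        rw [he]; exact can_stableF_empty B
  · -- Rd-rows are stable
    intro o
    match o with
    | none =>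
      have he : {x | (canModel B).Rd x none} = ∅ := by
        apply Set.eq_empty_iff_forall_notMem.mpr
        rintro x ⟨b', y', hb, _, _⟩
        cases hb
      rw [he]; exact can_stableF_empty B
    | some b' =>
      by_cases h : ∃ y₀ : FtName, Term.pos (.rdia y₀ b'.1) ∈ KSet B
      · obtain ⟨y₀, hy₀⟩ := h
        have hrI : Term.pos (.rI (ObName.diaS b'.1) y₀) ∈ KSet B :=
          KB_step (.adj_dia_l hy₀)
        have hocc : ObOccurs (ObName.diaS b'.1) (KSet B) :=
          ⟨_, hrI, by simp [Term.objs, PTerm.objs]⟩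
        have hrow : {x | (canModel B).Rd x (some b')} =
            gup (canModel B).I {some ⟨ObName.diaS b'.1, hocc⟩} := by
          ext x
          constructor
          · rintro ⟨b'', y'', hb, hy, h'⟩
            rw [Option.some_inj] at hb
            subst hb; subst hy
            intro a' ha'
            replace ha' := Set.mem_singleton_iff.mp ha'
            subst ha'
            exact canI_some.mpr (KB_step (.adj_dia_l h'))
          · intro hx
            have hIx := hx _ (Set.mem_singleton _)
            rcases hIx with ⟨b'', y'', hb, hy, h'⟩
            subst hy
            have hbe : b''.1 = ObName.diaS b'.1 := by
              have := Option.some_inj.mp hb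
              rw [← this]
            rw [hbe] at h'
            exact ⟨b', y'', rfl, rfl, KB_step (.icomp_dia h')⟩
        rw [hrow]; exact stableF_gup _ _
      · have he : {x | (canModel B).Rd x (some b')} = ∅ := by
          apply Set.eq_empty_iff_forall_notMem.mpr
          rintro x ⟨b'', y'', hb, hy, h'⟩
          rw [Option.some_inj] at hb
          subst hb
          exact h ⟨y''.1, h'⟩
        rw [he]; exact can_stableF_empty B
  · -- Rd-columns are stable
    intro x
    match x with
    | none =>
      have he : {a | (canModel B).Rd none a} = ∅ := by
        apply Set.eq_empty_iff_forall_notMem.mpr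
        rintro o ⟨b', y', _, hy, _⟩
        cases hy
      rw [he]; exact can_stableO_empty B
    | some y' =>
      by_cases h : ∃ b₀ : ObName, Term.pos (.rdia y'.1 b₀) ∈ KSet B
      · obtain ⟨b₀, hb₀⟩ := h
        have hrI : Term.pos (.rI b₀ (FtName.bbox y'.1)) ∈ KSet B :=
          KB_step (.adj_dia_r hb₀)
        have hocc : FtOccurs (FtName.bbox y'.1) (KSet B) :=
          ⟨_, hrI, by simp [Term.feats, PTerm.feats]⟩
        have hcol : {a | (canModel B).Rd (some y') a} =
            gdn (canModel B).I {some ⟨FtName.bbox y'.1, hocc⟩} := by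
          ext o
          constructor
          · rintro ⟨b', y'', hb, hy, h'⟩
            rw [Option.some_inj] at hy
            subst hb; subst hy
            intro x' hx'
            replace hx' := Set.mem_singleton_iff.mp hx'
            subst hx'
            exact canI_some.mpr (KB_step (.adj_dia_r h'))
          · intro ho
            have hIx := ho _ (Set.mem_singleton _)
            rcases hIx with ⟨b', y'', hb, hy, h'⟩
            subst hb
            have hye : y''.1 = FtName.bbox y'.1 := by
              have := Option.some_inj.mp hy
              rw [← this]
            rw [hye] at h'
            exact ⟨b', y', rfl, rfl, KB_step (.icomp_bbox h')⟩
        rw [hcol]; exact stableO_gdn _ _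
      · have he : {a | (canModel B).Rd (some y') a} = ∅ := by
          apply Set.eq_empty_iff_forall_notMem.mpr
          rintro o ⟨b', y'', hb, hy, h'⟩
          rw [Option.some_inj] at hy
          subst hy
          exact h ⟨b'.1, h'⟩
        rw [he]; exact can_stableO_empty B
  · -- atomic extents are stable
    intro n
    by_cases h : ∃ b₀ : ObName, Term.pos (.rI b₀ (.cls (.atom n))) ∈ KSet B
    · obtain ⟨b₀, hb₀⟩ := h
      have hocc : FtOccurs (FtName.cls (.atom n)) (KSet B) :=
        ⟨_, hb₀, by simp [Term.feats, PTerm.feats]⟩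
      have hcol : (canModel B).vA n =
          gdn (canModel B).I {some ⟨FtName.cls (.atom n), hocc⟩} := by
        ext o
        constructor
        · rintro ⟨b', hb, h'⟩
          subst hb
          intro x' hx'
          replace hx' := Set.mem_singleton_iff.mp hx'
          subst hx'
          exact canI_some.mpr h'
        · intro ho
          have hIx := ho _ (Set.mem_singleton _)
          rcases hIx with ⟨b', y'', hb, hy, h'⟩
          subst hb
          have hye : y''.1 = FtName.cls (.atom n) := by
            have := Option.some_inj.mp hy
            rw [← this]
          rw [hye] at h'
          exact ⟨b', rfl, h'⟩
      rw [hcol]; exact stableO_gdn _ _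
    · have he : (canModel B).vA n = ∅ := by
        apply Set.eq_empty_iff_forall_notMem.mpr
        rintro o ⟨b', hb, h'⟩
        exact h ⟨b'.1, h'⟩
      rw [he]; exact can_stableO_empty B

/-! ### The truth lemma for the canonical model -/

/-- Named part of the canonical extent of `C`. -/
def Ecan (B : Finset Term) (C : Cpt) : Set (canModel B).Ob :=
  {o | ∃ b', o = some b' ∧ Term.pos (.mem b'.1 C) ∈ KSet B}

/-- Named part of the canonical intent of `C`. -/
def Ycan (B : Finset Term) (C : Cpt) : Set (canModel B).Ft :=
  {x | ∃ y', x = some y' ∧ Term.pos (.fmem y'.1 C) ∈ KSet B}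

theorem fmem_cls (B : Finset Term) {C : Cpt} (h : Occurs C ↑B) :
    Term.pos (.fmem (.cls C) C) ∈ KSet B := KB_step (.create_x h)

theorem mem_cls (B : Finset Term) {C : Cpt} (h : Occurs C ↑B) :
    Term.pos (.mem (.cls C) C) ∈ KSet B := KB_step (.create_a h)

theorem ftOccurs_cls {B : Finset Term} {C : Cpt} (h : Occurs C ↑B) :
    FtOccurs (.cls C) (KSet B) := ⟨_, fmem_cls B h, by simp [Term.feats, PTerm.feats]⟩

theorem obOccurs_cls {B : Finset Term} {C : Cpt} (h : Occurs C ↑B) :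
    ObOccurs (.cls C) (KSet B) := ⟨_, mem_cls B h, by simp [Term.objs, PTerm.objs]⟩

theorem xC_mem_Ycan {B : Finset Term} {C : Cpt} (h : Occurs C ↑B) :
    (some ⟨.cls C, ftOccurs_cls h⟩) ∈ Ycan B C := ⟨_, rfl, fmem_cls B h⟩

theorem aC_mem_Ecan {B : Finset Term} {C : Cpt} (h : Occurs C ↑B) :
    (some ⟨.cls C, obOccurs_cls h⟩) ∈ Ecan B C := ⟨_, rfl, mem_cls B h⟩

theorem gup_Ecan {B : Finset Term} {C : Cpt} (h : Occurs C ↑B) :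
    gup (canModel B).I (Ecan B C) = Ycan B C := by
  ext x
  constructor
  · intro hx
    have hI := hx _ (aC_mem_Ecan h)
    rcases hI with ⟨b'', y'', hb, hy, h'⟩
    subst hy
    have hbe : b''.1 = ObName.cls C := by
      have := Option.some_inj.mp hb
      rw [← this]
    rw [hbe] at h'
    exact ⟨y'', rfl, KB_step (.app_a h')⟩
  · rintro ⟨y', rfl, hf⟩
    rintro o ⟨b', rfl, hm⟩
    exact canI_some.mpr (KB_step (.basic hm hf))

theorem gdn_Ycan {B : Finset Term} {C : Cpt} (h : Occurs C ↑B) :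
    gdn (canModel B).I (Ycan B C) = Ecan B C := by
  ext o
  constructor
  · intro ho
    have hI := ho _ (xC_mem_Ycan h)
    rcases hI with ⟨b'', y'', hb, hy, h'⟩
    subst hb
    have hye : y''.1 = FtName.cls C := by
      have := Option.some_inj.mp hy
      rw [← this]
    rw [hye] at h'
    exact ⟨b'', rfl, KB_step (.app_x h')⟩
  · rintro ⟨b', rfl, hm⟩
    rintro x ⟨y', rfl, hf⟩
    exact canI_some.mpr (KB_step (.basic hm hf))

theorem can_ci (B : Finset Term) :
    ∀ C : Cpt, Occurs C ↑B →
      ((canModel B).ci C).1 = Ecan B C ∧ ((canModel B).ci C).2 = Ycan B C := by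
  intro C
  induction C with
  | atom n =>
    intro hOcc
    have h1 : ((canModel B).ci (.atom n)).1 = Ecan B (.atom n) := by
      show (canModel B).vA n = Ecan B (.atom n)
      ext o
      constructor
      · rintro ⟨b', hb, h'⟩
        exact ⟨b', hb, KB_step (.app_x h')⟩
      · rintro ⟨b', rfl, hm⟩
        exact ⟨b', rfl, KB_step (.basic hm (fmem_cls B hOcc))⟩
    refine ⟨h1, ?_⟩
    show gup (canModel B).I ((canModel B).vA n) = Ycan B (.atom n)
    rw [show (canModel B).vA n = Ecan B (.atom n) from h1]
    exact gup_Ecan hOcc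
  | meet C₁ C₂ ih₁ ih₂ =>
    intro hOcc
    obtain ⟨e₁, _⟩ := ih₁ hOcc.meet_left
    obtain ⟨e₂, _⟩ := ih₂ hOcc.meet_right
    have h1 : ((canModel B).ci (.meet C₁ C₂)).1 = Ecan B (.meet C₁ C₂) := by
      show ((canModel B).ci C₁).1 ∩ ((canModel B).ci C₂).1 = _
      rw [e₁, e₂]
      ext o
      constructor
      · rintro ⟨⟨b', rfl, hm1⟩, ho2⟩
        rcases ho2 with ⟨b'', hb, hm2⟩
        replace hb := Option.some.inj hb
        subst hb
        exact ⟨b', rfl, KB_step (.andA_inv hm1 hm2 hOcc)⟩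
      · rintro ⟨b', rfl, hm⟩
        exact ⟨⟨b', rfl, KB_step (.andA_l hm)⟩, ⟨b', rfl, KB_step (.andA_r hm)⟩⟩
    refine ⟨h1, ?_⟩
    show gup (canModel B).I (((canModel B).ci C₁).1 ∩ ((canModel B).ci C₂).1) = _
    rw [show ((canModel B).ci C₁).1 ∩ ((canModel B).ci C₂).1
          = Ecan B (.meet C₁ C₂) from h1]
    exact gup_Ecan hOcc
  | join C₁ C₂ ih₁ ih₂ =>
    intro hOcc
    obtain ⟨_, y₁⟩ := ih₁ hOcc.join_left
    obtain ⟨_, y₂⟩ := ih₂ hOcc.join_right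
    have h2 : ((canModel B).ci (.join C₁ C₂)).2 = Ycan B (.join C₁ C₂) := by
      show ((canModel B).ci C₁).2 ∩ ((canModel B).ci C₂).2 = _
      rw [y₁, y₂]
      ext x
      constructor
      · rintro ⟨⟨y', rfl, hf1⟩, hx2⟩
        rcases hx2 with ⟨y'', hy, hf2⟩
        replace hy := Option.some.inj hy
        subst hy
        exact ⟨y', rfl, KB_step (.orX_inv hf1 hf2 hOcc)⟩
      · rintro ⟨y', rfl, hf⟩
        exact ⟨⟨y', rfl, KB_step (.orX_l hf)⟩, ⟨y', rfl, KB_step (.orX_r hf)⟩⟩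
    refine ⟨?_, h2⟩
    show gdn (canModel B).I (((canModel B).ci C₁).2 ∩ ((canModel B).ci C₂).2) = _
    rw [show ((canModel B).ci C₁).2 ∩ ((canModel B).ci C₂).2
          = Ycan B (.join C₁ C₂) from h2]
    exact gdn_Ycan hOcc
  | box C ih =>
    intro hOcc
    have hC : Occurs C ↑B := hOcc.of_box
    obtain ⟨_, yC⟩ := ih hC
    have h1 : ((canModel B).ci (.box C)).1 = Ecan B (.box C) := by
      show gdn (canModel B).Rb ((canModel B).ci C).2 = _
      rw [yC]
      ext o
      constructor
      · intro ho
        have hRb := ho _ (xC_mem_Ycan hC)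
        rcases hRb with ⟨b'', y'', hb, hy, h'⟩
        subst hb
        have hye : y''.1 = FtName.cls C := by
          have := Option.some_inj.mp hy
          rw [← this]
        rw [hye] at h'
        have h'' : Term.pos (.rI b''.1 (.cls (.box C))) ∈ KSet B :=
          KB_step (.adj_box_r h')
        exact ⟨b'', rfl, KB_step (.app_x h'')⟩
      · rintro ⟨b', rfl, hm⟩
        rintro x ⟨y', rfl, hf⟩
        exact canRb_some.mpr (KB_step (.boxR hm hf))
    refine ⟨h1, ?_⟩
    show gup (canModel B).I (gdn (canModel B).Rb ((canModel B).ci C).2) = _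
    rw [show gdn (canModel B).Rb ((canModel B).ci C).2 = Ecan B (.box C) from h1]
    exact gup_Ecan hOcc
  | dia C ih =>
    intro hOcc
    have hC : Occurs C ↑B := hOcc.of_dia
    obtain ⟨eC, _⟩ := ih hC
    have h2 : ((canModel B).ci (.dia C)).2 = Ycan B (.dia C) := by
      show gup (fun a x => (canModel B).Rd x a) ((canModel B).ci C).1 = _
      rw [eC]
      ext x
      constructor
      · intro hx
        have hRd := hx _ (aC_mem_Ecan hC)
        rcases hRd with ⟨b'', y'', hb, hy, h'⟩
        subst hy
        have hbe : b''.1 = ObName.cls C := by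
          have := Option.some_inj.mp hb
          rw [← this]
        rw [hbe] at h'
        have h'' : Term.pos (.rI (.cls (.dia C)) y''.1) ∈ KSet B :=
          KB_step (.adj_dia_l h')
        exact ⟨y'', rfl, KB_step (.app_a h'')⟩
      · rintro ⟨y', rfl, hf⟩
        rintro o ⟨b', rfl, hm⟩
        exact canRd_some.mpr (KB_step (.diaR hf hm))
    refine ⟨?_, h2⟩
    show gdn (canModel B).I
        (gup (fun a x => (canModel B).Rd x a) ((canModel B).ci C).1) = _
    rw [show gup (fun a x => (canModel B).Rd x a) ((canModel B).ci C).1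
          = Ycan B (.dia C) from h2]
    exact gdn_Ycan hOcc

theorem can_oi {B : Finset Term} {b : ObName} (h : ObOccurs b (KSet B)) :
    (canModel B).oi b = some ⟨b, h⟩ := by
  show cdite (ObOccurs b (Compl noExt ↑B)) _ _ = _
  unfold cdite
  exact dif_pos h

theorem can_fi {B : Finset Term} {y : FtName} (h : FtOccurs y (KSet B)) :
    (canModel B).fi y = some ⟨y, h⟩ := by
  show cdite (FtOccurs y (Compl noExt ↑B)) _ _ = _
  unfold cdite
  exact dif_pos h

/-- The canonical model of `B` satisfies any `A ⊆ B` whose negated terms do not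
positively appear in the completion of `B`. -/
theorem canModel_satAll {B : Finset Term} {A : Set Term} (hA : A ⊆ ↑B)
    (hneg : ∀ p : PTerm, Term.neg p ∈ A → Term.pos p ∉ KSet B) :
    (canModel B).SatAll A := by
  intro t ht
  cases t with
  | pos p =>
    cases p with
    | rI b y =>
      have hK : Term.pos (.rI b y) ∈ KSet B := compl_subset _ _ (hA ht)
      have hob : ObOccurs b (KSet B) := ⟨_, hK, by simp [Term.objs, PTerm.objs]⟩
      have hfy : FtOccurs y (KSet B) := ⟨_, hK, by simp [Term.feats, PTerm.feats]⟩
      show (canModel B).I ((canModel B).oi b) ((canModel B).fi y)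
      rw [can_oi hob, can_fi hfy]
      exact canI_some.mpr hK
    | rbox b y =>
      have hK : Term.pos (.rbox b y) ∈ KSet B := compl_subset _ _ (hA ht)
      have hob : ObOccurs b (KSet B) := ⟨_, hK, by simp [Term.objs, PTerm.objs]⟩
      have hfy : FtOccurs y (KSet B) := ⟨_, hK, by simp [Term.feats, PTerm.feats]⟩
      show (canModel B).Rb ((canModel B).oi b) ((canModel B).fi y)
      rw [can_oi hob, can_fi hfy]
      exact canRb_some.mpr hK
    | rdia y b =>
      have hK : Term.pos (.rdia y b) ∈ KSet B := compl_subset _ _ (hA ht)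
      have hob : ObOccurs b (KSet B) := ⟨_, hK, by simp [Term.objs, PTerm.objs]⟩
      have hfy : FtOccurs y (KSet B) := ⟨_, hK, by simp [Term.feats, PTerm.feats]⟩
      show (canModel B).Rd ((canModel B).fi y) ((canModel B).oi b)
      rw [can_oi hob, can_fi hfy]
      exact canRd_some.mpr hK
    | mem b C =>
      have hK : Term.pos (.mem b C) ∈ KSet B := compl_subset _ _ (hA ht)
      have hob : ObOccurs b (KSet B) := ⟨_, hK, by simp [Term.objs, PTerm.objs]⟩
      have hOcc : Occurs C ↑B := ⟨_, hA ht, mem_subs_self C⟩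
      show (canModel B).oi b ∈ ((canModel B).ci C).1
      rw [can_oi hob, (can_ci B C hOcc).1]
      exact ⟨⟨b, hob⟩, rfl, hK⟩
    | fmem y C =>
      have hK : Term.pos (.fmem y C) ∈ KSet B := compl_subset _ _ (hA ht)
      have hfy : FtOccurs y (KSet B) := ⟨_, hK, by simp [Term.feats, PTerm.feats]⟩
      have hOcc : Occurs C ↑B := ⟨_, hA ht, mem_subs_self C⟩
      show (canModel B).fi y ∈ ((canModel B).ci C).2
      rw [can_fi hfy, (can_ci B C hOcc).2]
      exact ⟨⟨y, hfy⟩, rfl, hK⟩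
  | neg p =>
    show ¬ (canModel B).SatP p
    cases p with
    | rI b y =>
      intro hP
      have htK : Term.neg (.rI b y) ∈ KSet B := compl_subset _ _ (hA ht)
      have hob : ObOccurs b (KSet B) := ⟨_, htK, by simp [Term.objs, PTerm.objs]⟩
      have hfy : FtOccurs y (KSet B) := ⟨_, htK, by simp [Term.feats, PTerm.feats]⟩
      rw [show (canModel B).SatP (.rI b y)
            = (canModel B).I ((canModel B).oi b) ((canModel B).fi y) from rfl,
          can_oi hob, can_fi hfy] at hP
      exact hneg _ ht (canI_some.mp hP)
    | rbox b y =>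
      intro hP
      have htK : Term.neg (.rbox b y) ∈ KSet B := compl_subset _ _ (hA ht)
      have hob : ObOccurs b (KSet B) := ⟨_, htK, by simp [Term.objs, PTerm.objs]⟩
      have hfy : FtOccurs y (KSet B) := ⟨_, htK, by simp [Term.feats, PTerm.feats]⟩
      rw [show (canModel B).SatP (.rbox b y)
            = (canModel B).Rb ((canModel B).oi b) ((canModel B).fi y) from rfl,
          can_oi hob, can_fi hfy] at hP
      exact hneg _ ht (canRb_some.mp hP)
    | rdia y b =>
      intro hP
      have htK : Term.neg (.rdia y b) ∈ KSet B := compl_subset _ _ (hA ht)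
      have hob : ObOccurs b (KSet B) := ⟨_, htK, by simp [Term.objs, PTerm.objs]⟩
      have hfy : FtOccurs y (KSet B) := ⟨_, htK, by simp [Term.feats, PTerm.feats]⟩
      rw [show (canModel B).SatP (.rdia y b)
            = (canModel B).Rd ((canModel B).fi y) ((canModel B).oi b) from rfl,
          can_oi hob, can_fi hfy] at hP
      exact hneg _ ht (canRd_some.mp hP)
    | mem b C =>
      intro hP
      have htK : Term.neg (.mem b C) ∈ KSet B := compl_subset _ _ (hA ht)
      have hob : ObOccurs b (KSet B) := ⟨_, htK, by simp [Term.objs, PTerm.objs]⟩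
      have hOcc : Occurs C ↑B := ⟨_, hA ht, mem_subs_self C⟩
      rw [show (canModel B).SatP (.mem b C)
            = ((canModel B).oi b ∈ ((canModel B).ci C).1) from rfl,
          can_oi hob, (can_ci B C hOcc).1] at hP
      rcases hP with ⟨b', hb, hm⟩
      replace hb := Option.some.inj hb
      subst hb
      exact hneg _ ht hm
    | fmem y C =>
      intro hP
      have htK : Term.neg (.fmem y C) ∈ KSet B := compl_subset _ _ (hA ht)
      have hfy : FtOccurs y (KSet B) := ⟨_, htK, by simp [Term.feats, PTerm.feats]⟩
      have hOcc : Occurs C ↑B := ⟨_, hA ht, mem_subs_self C⟩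
      rw [show (canModel B).SatP (.fmem y C)
            = ((canModel B).fi y ∈ ((canModel B).ci C).2) from rfl,
          can_fi hfy, (can_ci B C hOcc).2] at hP
      rcases hP with ⟨y', hy, hf⟩
      replace hy := Option.some.inj hy
      subst hy
      exact hneg _ ht hf

theorem occurs_insert {A : Finset Term} {t₀ : Term} {C : Cpt}
    (h : Occurs C ↑(insert t₀ A)) (h0 : t₀.cpts = ∅) : Occurs C ↑A := by
  rcases h with ⟨t, ht, hc⟩
  rw [Finset.coe_insert, Set.mem_insert_iff] at ht
  rcases ht with rfl | ht
  · rw [h0] at hc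
    exact absurd hc (Finset.notMem_empty C)
  · exact ⟨t, ht, hc⟩

theorem compl_insert_rbox (A : Finset Term) (nb ny : ℕ) :
    Compl noExt ↑(insert (Term.pos (.rbox (.base nb) (.base ny))) A) ⊆
      KSet A ∪ {Term.pos (.rbox (.base nb) (.base ny)),
                Term.pos (.rI (.bdia (.base nb)) (.base ny)),
                Term.pos (.rI (.base nb) (.box (.base ny)))} := by
  apply compl_min
  constructor
  · intro t ht
    rw [Finset.coe_insert, Set.mem_insert_iff] at ht
    rcases ht with rfl | ht
    · exact Set.mem_union_right _ (Set.mem_insert _ _)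
    · exact Set.mem_union_left _ (compl_subset _ _ ht)
  · intro t d
    cases d with
    | create_a hocc =>
      exact Set.mem_union_left _ (KB_step (.create_a (occurs_insert hocc rfl)))
    | create_x hocc =>
      exact Set.mem_union_left _ (KB_step (.create_x (occurs_insert hocc rfl)))
    | @basic bb yy CC h1 h2 =>
      refine Set.mem_union_left _ (KB_step (.basic (C := CC) ?_ ?_))
      · exact Or.resolve_right h1 (by rintro (h|h|h) <;> simp at h)
      · exact Or.resolve_right h2 (by rintro (h|h|h) <;> simp at h)
    | andA_l h1 =>
      exact Set.mem_union_left _ (KB_step (.andA_l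
        (Or.resolve_right h1 (by rintro (h|h|h) <;> simp at h))))
    | andA_r h1 =>
      exact Set.mem_union_left _ (KB_step (.andA_r
        (Or.resolve_right h1 (by rintro (h|h|h) <;> simp at h))))
    | orX_l h1 =>
      exact Set.mem_union_left _ (KB_step (.orX_l
        (Or.resolve_right h1 (by rintro (h|h|h) <;> simp at h))))
    | orX_r h1 =>
      exact Set.mem_union_left _ (KB_step (.orX_r
        (Or.resolve_right h1 (by rintro (h|h|h) <;> simp at h))))
    | @boxR bb yy CC h1 h2 =>
      refine Set.mem_union_left _ (KB_step (.boxR (C := CC) ?_ ?_))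
      · exact Or.resolve_right h1 (by rintro (h|h|h) <;> simp at h)
      · exact Or.resolve_right h2 (by rintro (h|h|h) <;> simp at h)
    | @diaR bb yy CC h1 h2 =>
      refine Set.mem_union_left _ (KB_step (.diaR (C := CC) ?_ ?_))
      · exact Or.resolve_right h1 (by rintro (h|h|h) <;> simp at h)
      · exact Or.resolve_right h2 (by rintro (h|h|h) <;> simp at h)
    | andA_inv h1 h2 hocc =>
      refine Set.mem_union_left _ (KB_step (.andA_inv ?_ ?_ (occurs_insert hocc rfl)))
      · exact Or.resolve_right h1 (by rintro (h|h|h) <;> simp at h)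
      · exact Or.resolve_right h2 (by rintro (h|h|h) <;> simp at h)
    | orX_inv h1 h2 hocc =>
      refine Set.mem_union_left _ (KB_step (.orX_inv ?_ ?_ (occurs_insert hocc rfl)))
      · exact Or.resolve_right h1 (by rintro (h|h|h) <;> simp at h)
      · exact Or.resolve_right h2 (by rintro (h|h|h) <;> simp at h)
    | adj_box_l h1 =>
      rcases h1 with h | h
      · exact Set.mem_union_left _ (KB_step (.adj_box_l h))
      · rcases h with h | h | h
        · simp only [Term.pos.injEq, PTerm.rbox.injEq] at h
          obtain ⟨rfl, rfl⟩ := h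
          exact Set.mem_union_right _ (Set.mem_insert_of_mem _ (Set.mem_insert _ _))
        · simp at h
        · simp at h
    | adj_box_r h1 =>
      rcases h1 with h | h
      · exact Set.mem_union_left _ (KB_step (.adj_box_r h))
      · rcases h with h | h | h
        · simp only [Term.pos.injEq, PTerm.rbox.injEq] at h
          obtain ⟨rfl, rfl⟩ := h
          exact Set.mem_union_right _
            (Set.mem_insert_of_mem _ (Set.mem_insert_of_mem _ rfl))
        · simp at h
        · simp at h
    | adj_dia_l h1 =>
      exact Set.mem_union_left _ (KB_step (.adj_dia_l
        (Or.resolve_right h1 (by rintro (h|h|h) <;> simp at h))))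
    | adj_dia_r h1 =>
      exact Set.mem_union_left _ (KB_step (.adj_dia_r
        (Or.resolve_right h1 (by rintro (h|h|h) <;> simp at h))))
    | @icomp_box b' y' h1 =>
      rcases h1 with h | h
      · exact Set.mem_union_left _ (KB_step (.icomp_box h))
      · rcases h with h | h | h
        · simp at h
        · exfalso
          simp only [Term.pos.injEq, PTerm.rI.injEq] at h
          obtain ⟨-, hy'⟩ := h
          cases y' <;> simp [FtName.boxS] at hy'
        · simp only [Set.mem_singleton_iff, Term.pos.injEq, PTerm.rI.injEq] at h
          obtain ⟨rfl, hy'⟩ := h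
          cases y' <;> simp [FtName.boxS] at hy'
          subst hy'
          exact Set.mem_union_right _ (Set.mem_insert _ _)
    | @icomp_bbox b' y' h1 =>
      rcases h1 with h | h
      · exact Set.mem_union_left _ (KB_step (.icomp_bbox h))
      · rcases h with h | h | h <;> simp at h
    | @icomp_dia b' y' h1 =>
      rcases h1 with h | h
      · exact Set.mem_union_left _ (KB_step (.icomp_dia h))
      · exfalso
        rcases h with h | h | h
        · simp at h
        · simp only [Term.pos.injEq, PTerm.rI.injEq] at h
          obtain ⟨hb', -⟩ := h
          cases b' <;> simp [ObName.diaS] at hb'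
        · simp only [Set.mem_singleton_iff, Term.pos.injEq, PTerm.rI.injEq] at h
          obtain ⟨hb', -⟩ := h
          cases b' <;> simp [ObName.diaS] at hb'
    | @icomp_bdia b' y' h1 =>
      rcases h1 with h | h
      · exact Set.mem_union_left _ (KB_step (.icomp_bdia h))
      · rcases h with h | h | h
        · simp at h
        · simp only [Term.pos.injEq, PTerm.rI.injEq, ObName.bdia.injEq] at h
          obtain ⟨rfl, rfl⟩ := h
          exact Set.mem_union_right _ (Set.mem_insert _ _)
        · simp at h
    | neg_b h1 =>
      exact Set.mem_union_left _ (KB_step (.neg_b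
        (Or.resolve_right h1 (by rintro (h|h|h) <;> simp at h))))
    | neg_x h1 =>
      exact Set.mem_union_left _ (KB_step (.neg_x
        (Or.resolve_right h1 (by rintro (h|h|h) <;> simp at h))))
    | app_x h1 =>
      exact Set.mem_union_left _ (KB_step (.app_x
        (Or.resolve_right h1 (by rintro (h|h|h) <;> simp at h))))
    | app_a h1 =>
      exact Set.mem_union_left _ (KB_step (.app_a
        (Or.resolve_right h1 (by rintro (h|h|h) <;> simp at h))))
    | extra he h1 => exact he.elim

theorem compl_insert_rI (A : Finset Term) (nb ny : ℕ) :
    Compl noExt ↑(insert (Term.pos (.rI (.base nb) (.base ny))) A) ⊆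
      KSet A ∪ {Term.pos (.rI (.base nb) (.base ny))} := by
  apply compl_min
  constructor
  · intro t ht
    rw [Finset.coe_insert, Set.mem_insert_iff] at ht
    rcases ht with rfl | ht
    · exact Set.mem_union_right _ rfl
    · exact Set.mem_union_left _ (compl_subset _ _ ht)
  · intro t d
    cases d with
    | create_a hocc =>
      exact Set.mem_union_left _ (KB_step (.create_a (occurs_insert hocc rfl)))
    | create_x hocc =>
      exact Set.mem_union_left _ (KB_step (.create_x (occurs_insert hocc rfl)))
    | @basic bb yy CC h1 h2 =>
      refine Set.mem_union_left _ (KB_step (.basic (C := CC) ?_ ?_))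
      · exact Or.resolve_right h1 (by rintro h; simp at h)
      · exact Or.resolve_right h2 (by rintro h; simp at h)
    | andA_l h1 =>
      exact Set.mem_union_left _ (KB_step (.andA_l
        (Or.resolve_right h1 (by rintro h; simp at h))))
    | andA_r h1 =>
      exact Set.mem_union_left _ (KB_step (.andA_r
        (Or.resolve_right h1 (by rintro h; simp at h))))
    | orX_l h1 =>
      exact Set.mem_union_left _ (KB_step (.orX_l
        (Or.resolve_right h1 (by rintro h; simp at h))))
    | orX_r h1 =>
      exact Set.mem_union_left _ (KB_step (.orX_r
        (Or.resolve_right h1 (by rintro h; simp at h))))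
    | @boxR bb yy CC h1 h2 =>
      refine Set.mem_union_left _ (KB_step (.boxR (C := CC) ?_ ?_))
      · exact Or.resolve_right h1 (by rintro h; simp at h)
      · exact Or.resolve_right h2 (by rintro h; simp at h)
    | @diaR bb yy CC h1 h2 =>
      refine Set.mem_union_left _ (KB_step (.diaR (C := CC) ?_ ?_))
      · exact Or.resolve_right h1 (by rintro h; simp at h)
      · exact Or.resolve_right h2 (by rintro h; simp at h)
    | andA_inv h1 h2 hocc =>
      refine Set.mem_union_left _ (KB_step (.andA_inv ?_ ?_ (occurs_insert hocc rfl)))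
      · exact Or.resolve_right h1 (by rintro h; simp at h)
      · exact Or.resolve_right h2 (by rintro h; simp at h)
    | orX_inv h1 h2 hocc =>
      refine Set.mem_union_left _ (KB_step (.orX_inv ?_ ?_ (occurs_insert hocc rfl)))
      · exact Or.resolve_right h1 (by rintro h; simp at h)
      · exact Or.resolve_right h2 (by rintro h; simp at h)
    | adj_box_l h1 =>
      exact Set.mem_union_left _ (KB_step (.adj_box_l
        (Or.resolve_right h1 (by rintro h; simp at h))))
    | adj_box_r h1 =>
      exact Set.mem_union_left _ (KB_step (.adj_box_r
        (Or.resolve_right h1 (by rintro h; simp at h))))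
    | adj_dia_l h1 =>
      exact Set.mem_union_left _ (KB_step (.adj_dia_l
        (Or.resolve_right h1 (by rintro h; simp at h))))
    | adj_dia_r h1 =>
      exact Set.mem_union_left _ (KB_step (.adj_dia_r
        (Or.resolve_right h1 (by rintro h; simp at h))))
    | @icomp_box b' y' h1 =>
      refine Set.mem_union_left _ (KB_step (.icomp_box (Or.resolve_right h1 ?_)))
      rintro h
      rw [Set.mem_singleton_iff] at h
      simp only [Term.pos.injEq, PTerm.rI.injEq] at h
      obtain ⟨-, hy'⟩ := h
      cases y' <;> simp [FtName.boxS] at hy'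
    | icomp_bbox h1 =>
      exact Set.mem_union_left _ (KB_step (.icomp_bbox
        (Or.resolve_right h1 (by rintro h; simp at h))))
    | @icomp_dia b' y' h1 =>
      refine Set.mem_union_left _ (KB_step (.icomp_dia (Or.resolve_right h1 ?_)))
      rintro h
      rw [Set.mem_singleton_iff] at h
      simp only [Term.pos.injEq, PTerm.rI.injEq] at h
      obtain ⟨hb', -⟩ := h
      cases b' <;> simp [ObName.diaS] at hb'
    | icomp_bdia h1 =>
      exact Set.mem_union_left _ (KB_step (.icomp_bdia
        (Or.resolve_right h1 (by rintro h; simp at h))))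
    | neg_b h1 =>
      exact Set.mem_union_left _ (KB_step (.neg_b
        (Or.resolve_right h1 (by rintro h; simp at h))))
    | neg_x h1 =>
      exact Set.mem_union_left _ (KB_step (.neg_x
        (Or.resolve_right h1 (by rintro h; simp at h))))
    | app_x h1 =>
      exact Set.mem_union_left _ (KB_step (.app_x
        (Or.resolve_right h1 (by rintro h; simp at h))))
    | app_a h1 =>
      exact Set.mem_union_left _ (KB_step (.app_a
        (Or.resolve_right h1 (by rintro h; simp at h))))
    | extra he h1 => exact he.elim

theorem compl_insert_rdia (A : Finset Term) (nb ny : ℕ) :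
    Compl noExt ↑(insert (Term.pos (.rdia (.base ny) (.base nb))) A) ⊆
      KSet A ∪ {Term.pos (.rdia (.base ny) (.base nb)),
                Term.pos (.rI (.dia (.base nb)) (.base ny)),
                Term.pos (.rI (.base nb) (.bbox (.base ny)))} := by
  apply compl_min
  constructor
  · intro t ht
    rw [Finset.coe_insert, Set.mem_insert_iff] at ht
    rcases ht with rfl | ht
    · exact Set.mem_union_right _ (Set.mem_insert _ _)
    · exact Set.mem_union_left _ (compl_subset _ _ ht)
  · intro t d
    cases d with
    | create_a hocc =>
      exact Set.mem_union_left _ (KB_step (.create_a (occurs_insert hocc rfl)))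
    | create_x hocc =>
      exact Set.mem_union_left _ (KB_step (.create_x (occurs_insert hocc rfl)))
    | @basic bb yy CC h1 h2 =>
      refine Set.mem_union_left _ (KB_step (.basic (C := CC) ?_ ?_))
      · exact Or.resolve_right h1 (by rintro (h|h|h) <;> simp at h)
      · exact Or.resolve_right h2 (by rintro (h|h|h) <;> simp at h)
    | andA_l h1 =>
      exact Set.mem_union_left _ (KB_step (.andA_l
        (Or.resolve_right h1 (by rintro (h|h|h) <;> simp at h))))
    | andA_r h1 =>
      exact Set.mem_union_left _ (KB_step (.andA_r
        (Or.resolve_right h1 (by rintro (h|h|h) <;> simp at h))))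
    | orX_l h1 =>
      exact Set.mem_union_left _ (KB_step (.orX_l
        (Or.resolve_right h1 (by rintro (h|h|h) <;> simp at h))))
    | orX_r h1 =>
      exact Set.mem_union_left _ (KB_step (.orX_r
        (Or.resolve_right h1 (by rintro (h|h|h) <;> simp at h))))
    | @boxR bb yy CC h1 h2 =>
      refine Set.mem_union_left _ (KB_step (.boxR (C := CC) ?_ ?_))
      · exact Or.resolve_right h1 (by rintro (h|h|h) <;> simp at h)
      · exact Or.resolve_right h2 (by rintro (h|h|h) <;> simp at h)
    | @diaR bb yy CC h1 h2 =>
      refine Set.mem_union_left _ (KB_step (.diaR (C := CC) ?_ ?_))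
      · exact Or.resolve_right h1 (by rintro (h|h|h) <;> simp at h)
      · exact Or.resolve_right h2 (by rintro (h|h|h) <;> simp at h)
    | andA_inv h1 h2 hocc =>
      refine Set.mem_union_left _ (KB_step (.andA_inv ?_ ?_ (occurs_insert hocc rfl)))
      · exact Or.resolve_right h1 (by rintro (h|h|h) <;> simp at h)
      · exact Or.resolve_right h2 (by rintro (h|h|h) <;> simp at h)
    | orX_inv h1 h2 hocc =>
      refine Set.mem_union_left _ (KB_step (.orX_inv ?_ ?_ (occurs_insert hocc rfl)))
      · exact Or.resolve_right h1 (by rintro (h|h|h) <;> simp at h)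
      · exact Or.resolve_right h2 (by rintro (h|h|h) <;> simp at h)
    | adj_box_l h1 =>
      exact Set.mem_union_left _ (KB_step (.adj_box_l
        (Or.resolve_right h1 (by rintro (h|h|h) <;> simp at h))))
    | adj_box_r h1 =>
      exact Set.mem_union_left _ (KB_step (.adj_box_r
        (Or.resolve_right h1 (by rintro (h|h|h) <;> simp at h))))
    | adj_dia_l h1 =>
      rcases h1 with h | h
      · exact Set.mem_union_left _ (KB_step (.adj_dia_l h))
      · rcases h with h | h | h
        · simp only [Term.pos.injEq, PTerm.rdia.injEq] at h
          obtain ⟨rfl, rfl⟩ := h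
          exact Set.mem_union_right _ (Set.mem_insert_of_mem _ (Set.mem_insert _ _))
        · simp at h
        · simp at h
    | adj_dia_r h1 =>
      rcases h1 with h | h
      · exact Set.mem_union_left _ (KB_step (.adj_dia_r h))
      · rcases h with h | h | h
        · simp only [Term.pos.injEq, PTerm.rdia.injEq] at h
          obtain ⟨rfl, rfl⟩ := h
          exact Set.mem_union_right _
            (Set.mem_insert_of_mem _ (Set.mem_insert_of_mem _ rfl))
        · simp at h
        · simp at h
    | @icomp_box b' y' h1 =>
      rcases h1 with h | h
      · exact Set.mem_union_left _ (KB_step (.icomp_box h))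
      · exfalso
        rcases h with h | h | h
        · simp at h
        · simp only [Term.pos.injEq, PTerm.rI.injEq] at h
          obtain ⟨-, hy'⟩ := h
          cases y' <;> simp [FtName.boxS] at hy'
        · simp only [Set.mem_singleton_iff, Term.pos.injEq, PTerm.rI.injEq] at h
          obtain ⟨-, hy'⟩ := h
          cases y' <;> simp [FtName.boxS] at hy'
    | @icomp_bbox b' y' h1 =>
      rcases h1 with h | h
      · exact Set.mem_union_left _ (KB_step (.icomp_bbox h))
      · rcases h with h | h | h
        · simp at h
        · simp at h
        · simp only [Set.mem_singleton_iff, Term.pos.injEq, PTerm.rI.injEq,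
            FtName.bbox.injEq] at h
          obtain ⟨rfl, rfl⟩ := h
          exact Set.mem_union_right _ (Set.mem_insert _ _)
    | @icomp_dia b' y' h1 =>
      rcases h1 with h | h
      · exact Set.mem_union_left _ (KB_step (.icomp_dia h))
      · rcases h with h | h | h
        · simp at h
        · simp only [Term.pos.injEq, PTerm.rI.injEq] at h
          obtain ⟨hb', rfl⟩ := h
          cases b' <;> simp [ObName.diaS] at hb'
          subst hb'
          exact Set.mem_union_right _ (Set.mem_insert _ _)
        · exfalso
          simp only [Set.mem_singleton_iff, Term.pos.injEq, PTerm.rI.injEq] at h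
          obtain ⟨hb', -⟩ := h
          cases b' <;> simp [ObName.diaS] at hb'
    | @icomp_bdia b' y' h1 =>
      rcases h1 with h | h
      · exact Set.mem_union_left _ (KB_step (.icomp_bdia h))
      · rcases h with h | h | h
        · simp at h
        · simp at h
        · simp at h
    | neg_b h1 =>
      exact Set.mem_union_left _ (KB_step (.neg_b
        (Or.resolve_right h1 (by rintro (h|h|h) <;> simp at h))))
    | neg_x h1 =>
      exact Set.mem_union_left _ (KB_step (.neg_x
        (Or.resolve_right h1 (by rintro (h|h|h) <;> simp at h))))
    | app_x h1 =>
      exact Set.mem_union_left _ (KB_step (.app_x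
        (Or.resolve_right h1 (by rintro (h|h|h) <;> simp at h))))
    | app_a h1 =>
      exact Set.mem_union_left _ (KB_step (.app_a
        (Or.resolve_right h1 (by rintro (h|h|h) <;> simp at h))))
    | extra he h1 => exact he.elim

/-- For any consistent LE-ALC ABox `A` and any individual
names `b`, `y` occurring in `A`:
(1) `A ⊨ ¬(b I y)` iff `¬(b I y) ∈ A`;
(2) `A ⊨ ¬(b R_□ y)` iff `¬(b R_□ y) ∈ A`;
(3) `A ⊨ ¬(y R_◇ b)` iff `¬(y R_◇ b) ∈ A`. -/
theorem negative_relational_queries (A : Finset Term) (hwf : ABoxWF ↑A)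
    (hcon : Consistent ↑A) (b : ObName) (y : FtName)
    (hb : ObOccurs b ↑A) (hy : FtOccurs y ↑A) :
    (Entails ↑A (.neg (.rI b y)) ↔ Term.neg (.rI b y) ∈ A) ∧
    (Entails ↑A (.neg (.rbox b y)) ↔ Term.neg (.rbox b y) ∈ A) ∧
    (Entails ↑A (.neg (.rdia y b)) ↔ Term.neg (.rdia y b) ∈ A) := by
  obtain ⟨tb, htb, hbt⟩ := hb
  obtain ⟨nb, rfl⟩ := (hwf tb htb).1 b hbt
  obtain ⟨ty, hty, hyt⟩ := hy
  obtain ⟨ny, rfl⟩ := (hwf ty hty).2 y hyt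
  obtain ⟨M, hMg, hMs⟩ := hcon
  have hsound : ∀ p : PTerm, Term.pos p ∈ KSet A → SatC M p :=
    compl_satC M hMg hMs hwf
  have hKnegP : ∀ p : PTerm, Term.neg p ∈ (↑A : Set Term) → Term.pos p ∉ KSet A := by
    intro p hp hpos
    have hC := hsound p hpos
    have hP := satP_of_satC M (hwf _ hp).1 (hwf _ hp).2 hC
    exact (hMs _ hp) hP
  refine ⟨⟨?_, ?_⟩, ⟨?_, ?_⟩, ⟨?_, ?_⟩⟩
  · -- I, forward
    intro hent
    by_contra hnin
    have hKsub := compl_insert_rI A nb ny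
    set B := insert (Term.pos (.rI (.base nb) (.base ny))) A with hB
    have hNg := canModel_good B
    have hNs : (canModel B).SatAll ↑A := by
      apply canModel_satAll
      · rw [hB, Finset.coe_insert]; exact Set.subset_insert _ _
      · intro p hp hpos
        rcases hKsub hpos with h | h
        · exact hKnegP p hp h
        · rw [Set.mem_singleton_iff] at h
          injection h with h'
          subst h'
          exact hnin (Finset.mem_coe.mp hp)
    have hcontra := hent (canModel B) hNg hNs
    apply hcontra
    have hβK : Term.pos (.rI (.base nb) (.base ny)) ∈ KSet B :=
      mem_KB (Finset.mem_insert_self _ _)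
    have hob : ObOccurs (.base nb) (KSet B) :=
      ⟨_, hβK, by simp [Term.objs, PTerm.objs]⟩
    have hfy : FtOccurs (.base ny) (KSet B) :=
      ⟨_, hβK, by simp [Term.feats, PTerm.feats]⟩
    show (canModel B).I _ _
    rw [can_oi hob, can_fi hfy]
    exact canI_some.mpr hβK
  · intro hmem M' hg' hs'
    exact hs' _ hmem
  · -- R_box, forward
    intro hent
    by_contra hnin
    have hKsub := compl_insert_rbox A nb ny
    set B := insert (Term.pos (.rbox (.base nb) (.base ny))) A with hB
    have hNg := canModel_good B
    have hNs : (canModel B).SatAll ↑A := by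
      apply canModel_satAll
      · rw [hB, Finset.coe_insert]; exact Set.subset_insert _ _
      · intro p hp hpos
        rcases hKsub hpos with h | h
        · exact hKnegP p hp h
        · rcases h with h | h | h
          · injection h with h'
            subst h'
            exact hnin (Finset.mem_coe.mp hp)
          · injection h with h'
            subst h'
            obtain ⟨m, hm⟩ := (hwf _ hp).1 (ObName.bdia (.base nb))
              (by simp [Term.objs, PTerm.objs])
            simp at hm
          · rw [Set.mem_singleton_iff] at h
            injection h with h'
            subst h'
            obtain ⟨m, hm⟩ := (hwf _ hp).2 (FtName.box (.base ny))
              (by simp [Term.feats, PTerm.feats])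
            simp at hm
    have hcontra := hent (canModel B) hNg hNs
    apply hcontra
    have hβK : Term.pos (.rbox (.base nb) (.base ny)) ∈ KSet B :=
      mem_KB (Finset.mem_insert_self _ _)
    have hob : ObOccurs (.base nb) (KSet B) :=
      ⟨_, hβK, by simp [Term.objs, PTerm.objs]⟩
    have hfy : FtOccurs (.base ny) (KSet B) :=
      ⟨_, hβK, by simp [Term.feats, PTerm.feats]⟩
    show (canModel B).Rb _ _
    rw [can_oi hob, can_fi hfy]
    exact canRb_some.mpr hβK
  · intro hmem M' hg' hs'
    exact hs' _ hmem
  · -- R_dia, forward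
    intro hent
    by_contra hnin
    have hKsub := compl_insert_rdia A nb ny
    set B := insert (Term.pos (.rdia (.base ny) (.base nb))) A with hB
    have hNg := canModel_good B
    have hNs : (canModel B).SatAll ↑A := by
      apply canModel_satAll
      · rw [hB, Finset.coe_insert]; exact Set.subset_insert _ _
      · intro p hp hpos
        rcases hKsub hpos with h | h
        · exact hKnegP p hp h
        · rcases h with h | h | h
          · injection h with h'
            subst h'
            exact hnin (Finset.mem_coe.mp hp)
          · injection h with h'
            subst h'
            obtain ⟨m, hm⟩ := (hwf _ hp).1 (ObName.dia (.base nb))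
              (by simp [Term.objs, PTerm.objs])
            simp at hm
          · rw [Set.mem_singleton_iff] at h
            injection h with h'
            subst h'
            obtain ⟨m, hm⟩ := (hwf _ hp).2 (FtName.bbox (.base ny))
              (by simp [Term.feats, PTerm.feats])
            simp at hm
    have hcontra := hent (canModel B) hNg hNs
    apply hcontra
    have hβK : Term.pos (.rdia (.base ny) (.base nb)) ∈ KSet B :=
      mem_KB (Finset.mem_insert_self _ _)
    have hob : ObOccurs (.base nb) (KSet B) :=
      ⟨_, hβK, by simp [Term.objs, PTerm.objs]⟩
    have hfy : FtOccurs (.base ny) (KSet B) :=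
      ⟨_, hβK, by simp [Term.feats, PTerm.feats]⟩
    show (canModel B).Rd _ _
    rw [can_oi hob, can_fi hfy]
    exact canRd_some.mpr hβK
  · intro hmem M' hg' hs'
    exact hs' _ hmem

end LEALC
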